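/- arXiv:1012.3153 — 6 statements merged into one kernel-verified Lean document; each statement's English description precedes it below -/
import Mathlib

section
/- Let 1 < q ≤ 2 and 0 ≤ r ≤ 1. Then for all t ∈ ℝ, a_q(0) ≤ a_q(t) ≤ a_q(π/2), where a_q(t) = ∫_{-π}^{π} |cos(s-t)|^q (1 + r² - 2r cos s)^{q-1} ds. -/
open Real intervalIntegral MeasureTheory Set Filter

noncomputable def aqW (q r s : ℝ) : ℝ := (1 + r ^ 2 - 2 * r * Real.cos s) ^ (q - 1)

noncomputable def aqG (q x : ℝ) : ℝ :=
  q * Real.cos x * |Real.cos x| ^ (q - 2) * Real.sin x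

lemma aq_base_nonneg {r : ℝ} (hr0 : 0 ≤ r) (s : ℝ) :
    0 ≤ 1 + r ^ 2 - 2 * r * Real.cos s := by
  nlinarith [Real.cos_le_one s, mul_nonneg hr0 (sub_nonneg.2 (Real.cos_le_one s)), sq_nonneg (1 - r)]

lemma aqW_nonneg {q r : ℝ} (hr0 : 0 ≤ r) (s : ℝ) : 0 ≤ aqW q r s :=
  Real.rpow_nonneg (aq_base_nonneg hr0 s) _

lemma aqW_continuous {q r : ℝ} (hq1 : 1 < q) : Continuous (aqW q r) := by
  rw [continuous_iff_continuousAt]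
  intro s
  have hbase : Continuous fun s : ℝ => 1 + r ^ 2 - 2 * r * Real.cos s := by continuity
  exact (Real.continuousAt_rpow_const _ _ (Or.inr (by linarith))).comp hbase.continuousAt

lemma aqF_continuous {q : ℝ} (hq1 : 1 < q) : Continuous fun x : ℝ => |Real.cos x| ^ q := by
  rw [continuous_iff_continuousAt]
  intro s
  have hbase : Continuous fun x : ℝ => |Real.cos x| := Real.continuous_cos.abs
  exact (Real.continuousAt_rpow_const _ _ (Or.inr (by linarith))).comp hbase.continuousAt

lemma aqW_le_four {q r : ℝ} (hq1 : 1 < q) (hq2 : q ≤ 2) (hr0 : 0 ≤ r) (hr1 : r ≤ 1) (s : ℝ) :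
    aqW q r s ≤ 4 := by
  have h1 : aqW q r s ≤ (4 : ℝ) ^ (q - 1) := by
    apply Real.rpow_le_rpow (aq_base_nonneg hr0 s) _ (by linarith)
    nlinarith [Real.neg_one_le_cos s, mul_nonneg hr0 (by linarith [Real.neg_one_le_cos s] : (0:ℝ) ≤ 1 + Real.cos s)]
  calc aqW q r s ≤ (4:ℝ) ^ (q - 1) := h1
    _ ≤ (4:ℝ) ^ (1:ℝ) := Real.rpow_le_rpow_of_exponent_le (by norm_num) (by linarith)
    _ = 4 := Real.rpow_one 4

noncomputable def aqA (q r t : ℝ) : ℝ := ∫ s in (-π)..π, |Real.cos (s - t)| ^ q * aqW q r s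

lemma aqG_meas {q : ℝ} : Measurable (aqG q) := by
  unfold aqG
  exact (((measurable_const.mul Real.measurable_cos).mul
    (Real.measurable_cos.abs.pow measurable_const)).mul Real.measurable_sin)

lemma aq_abs_cos_mul {q : ℝ} (hq1 : 1 < q) (x : ℝ) :
    |Real.cos x * |Real.cos x| ^ (q - 2)| = |Real.cos x| ^ (q - 1) := by
  rcases eq_or_ne (Real.cos x) 0 with hc | hc
  · rw [hc]
    simp [Real.zero_rpow (show q - 1 ≠ 0 by linarith)]
  · have hpos : 0 < |Real.cos x| := abs_pos.2 hc
    rw [abs_mul, abs_of_nonneg (Real.rpow_nonneg (abs_nonneg _) (q-2)),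
      show q - 1 = 1 + (q - 2) by ring, Real.rpow_add hpos, Real.rpow_one]

lemma aqG_abs_le {q : ℝ} (hq1 : 1 < q) (x : ℝ) : |aqG q x| ≤ q := by
  have hq0 : (0:ℝ) ≤ q := by linarith
  unfold aqG
  rw [show q * Real.cos x * |Real.cos x| ^ (q - 2) * Real.sin x
      = q * (Real.cos x * |Real.cos x| ^ (q - 2)) * Real.sin x by ring]
  rw [abs_mul, abs_mul, abs_of_nonneg hq0, aq_abs_cos_mul hq1]
  have h1 : |Real.cos x| ^ (q - 1) ≤ 1 :=
    Real.rpow_le_one (abs_nonneg _) (Real.abs_cos_le_one x) (by linarith)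
  calc q * |Real.cos x| ^ (q-1) * |Real.sin x| ≤ q * 1 * 1 := by
        apply mul_le_mul _ (Real.abs_sin_le_one x) (abs_nonneg _) (by linarith)
        · exact mul_le_mul_of_nonneg_left h1 hq0
    _ = q := by ring

lemma aqG_neg {q : ℝ} (x : ℝ) : aqG q (-x) = -aqG q x := by
  unfold aqG; rw [Real.cos_neg, Real.sin_neg]; ring

lemma aqG_pi_sub {q : ℝ} (x : ℝ) : aqG q (π - x) = -aqG q x := by
  unfold aqG; rw [Real.cos_pi_sub, Real.sin_pi_sub, abs_neg]; ring

lemma aqG_sub_pi {q : ℝ} (x : ℝ) : aqG q (x - π) = aqG q x := by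
  unfold aqG; rw [Real.cos_sub_pi, Real.sin_sub_pi, abs_neg]; ring

lemma aqG_nonneg {q : ℝ} (hq0 : 0 ≤ q) {x : ℝ} (hx : x ∈ Set.Icc 0 (π/2)) :
    0 ≤ aqG q x := by
  have hc : 0 ≤ Real.cos x := Real.cos_nonneg_of_mem_Icc ⟨by linarith [hx.1, Real.pi_pos], hx.2⟩
  have hs : 0 ≤ Real.sin x := Real.sin_nonneg_of_nonneg_of_le_pi hx.1 (by linarith [hx.2, Real.pi_pos])
  exact mul_nonneg (mul_nonneg (mul_nonneg hq0 hc) (Real.rpow_nonneg (abs_nonneg _) _)) hs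

lemma aqF_hasDeriv {q : ℝ} (hq1 : 1 < q) (x : ℝ) :
    HasDerivAt (fun y => |Real.cos y| ^ q) (-aqG q x) x := by
  rcases lt_trichotomy (Real.cos x) 0 with hc | hc | hc
  · -- cos x < 0
    have hev : (fun y => |Real.cos y| ^ q) =ᶠ[nhds x] fun y => (-Real.cos y) ^ q := by
      have h0 : ∀ᶠ y in nhds x, Real.cos y < 0 :=
        (Real.continuous_cos.continuousAt (x := x)).eventually (eventually_lt_nhds hc)
      filter_upwards [h0] with y hy
      rw [abs_of_neg hy]
    have hinner : HasDerivAt (fun y : ℝ => -Real.cos y) (Real.sin x) x := by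
      have h := (Real.hasDerivAt_cos x).neg
      rw [neg_neg] at h
      exact h
    have houter : HasDerivAt (fun z : ℝ => z ^ q) (q * (-Real.cos x) ^ (q - 1)) (-Real.cos x) :=
      Real.hasDerivAt_rpow_const (Or.inl (by linarith))
    have hcomp := houter.comp x hinner
    have heq : q * (-Real.cos x) ^ (q - 1) * Real.sin x = -aqG q x := by
      have hpos : (0:ℝ) < -Real.cos x := by linarith
      rw [show q - 1 = 1 + (q - 2) by ring, Real.rpow_add hpos, Real.rpow_one]
      unfold aqG
      rw [abs_of_neg hc]
      ring
    rw [← heq]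
    exact hcomp.congr_of_eventuallyEq hev
  · -- cos x = 0
    have hq0 : (0:ℝ) < q := by linarith
    have hval : -aqG q x = 0 := by unfold aqG; rw [hc]; ring
    rw [hval, hasDerivAt_iff_tendsto]
    have hfx : |Real.cos x| ^ q = 0 := by
      rw [hc]; simp [Real.zero_rpow (ne_of_gt hq0)]
    apply squeeze_zero (g := fun y => |y - x| ^ (q - 1))
    · intro y; positivity
    · intro y
      rcases eq_or_ne y x with hy | hy
      · simp [hy, hfx, Real.zero_rpow (show q - 1 ≠ 0 by linarith)]
      · have hyx : (0:ℝ) < |y - x| := abs_pos.2 (sub_ne_zero.2 hy)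
        have h1 : |Real.cos y| ≤ |y - x| := by
          have hcc : Real.cos y = Real.cos y - Real.cos x := by rw [hc]; ring
          rw [hcc, Real.cos_sub_cos]
          have e1 : |Real.sin ((y + x) / 2)| ≤ 1 := Real.abs_sin_le_one _
          have e2 : |Real.sin ((y - x) / 2)| ≤ |y - x| / 2 := by
            calc |Real.sin ((y - x) / 2)| ≤ |(y - x) / 2| := Real.abs_sin_le_abs
              _ = |y - x| / 2 := by rw [abs_div]; norm_num
          calc |(-2) * Real.sin ((y + x)/2) * Real.sin ((y - x)/2)|
              = 2 * |Real.sin ((y + x)/2)| * |Real.sin ((y - x)/2)| := by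
                rw [abs_mul, abs_mul]; norm_num
            _ ≤ 2 * 1 * (|y - x| / 2) := by
                apply mul_le_mul _ e2 (abs_nonneg _) (by norm_num)
                nlinarith [abs_nonneg (Real.sin ((y+x)/2))]
            _ = |y - x| := by ring
        have h2 : |Real.cos y| ^ q ≤ |y - x| ^ q :=
          Real.rpow_le_rpow (abs_nonneg _) h1 hq0.le
        have hval2 : ‖y - x‖⁻¹ * ‖|Real.cos y| ^ q - |Real.cos x| ^ q - (y - x) • (0:ℝ)‖
            = |y - x|⁻¹ * |Real.cos y| ^ q := by
          rw [hfx]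
          simp [Real.norm_eq_abs, abs_of_nonneg (Real.rpow_nonneg (abs_nonneg _) q)]
        rw [hval2]
        calc |y - x|⁻¹ * |Real.cos y| ^ q ≤ |y - x|⁻¹ * |y - x| ^ q := by
              apply mul_le_mul_of_nonneg_left h2 (inv_nonneg.2 (abs_nonneg _))
          _ = |y - x| ^ (q - 1) := by
              rw [Real.rpow_sub hyx, Real.rpow_one]
              ring
    · have h1 : Tendsto (fun y : ℝ => |y - x|) (nhds x) (nhds 0) := by
        have hcont : Continuous fun y : ℝ => |y - x| := by continuity
        have := hcont.tendsto x
        simpa using this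
      have h2 : ContinuousAt (fun z : ℝ => z ^ (q - 1)) 0 :=
        Real.continuousAt_rpow_const 0 _ (Or.inr (by linarith))
      have h3 := h2.tendsto.comp h1
      simpa [Function.comp_def, Real.zero_rpow (show q - 1 ≠ 0 by linarith)] using h3
  · -- cos x > 0
    have hev : (fun y => |Real.cos y| ^ q) =ᶠ[nhds x] fun y => (Real.cos y) ^ q := by
      have h0 : ∀ᶠ y in nhds x, 0 < Real.cos y :=
        (Real.continuous_cos.continuousAt (x := x)).eventually (eventually_gt_nhds hc)
      filter_upwards [h0] with y hy
      rw [abs_of_pos hy]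
    have hinner : HasDerivAt (fun y : ℝ => Real.cos y) (-Real.sin x) x := Real.hasDerivAt_cos x
    have houter : HasDerivAt (fun z : ℝ => z ^ q) (q * (Real.cos x) ^ (q - 1)) (Real.cos x) :=
      Real.hasDerivAt_rpow_const (Or.inl (by linarith))
    have hcomp := houter.comp x hinner
    have heq : q * (Real.cos x) ^ (q - 1) * (-Real.sin x) = -aqG q x := by
      rw [show q - 1 = 1 + (q - 2) by ring, Real.rpow_add hc, Real.rpow_one]
      unfold aqG
      rw [abs_of_pos hc]
      ring
    rw [← heq]
    exact hcomp.congr_of_eventuallyEq hev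

lemma aq_meas_bdd_intervalIntegrable (F : ℝ → ℝ) (hF : Measurable F) (C : ℝ)
    (hC : ∀ x, |F x| ≤ C) (a b : ℝ) : IntervalIntegrable F volume a b := by
  rw [intervalIntegrable_iff]
  refine Integrable.mono' (g := fun _ => C)
    (integrableOn_const measure_Ioc_lt_top.ne)
    hF.aestronglyMeasurable.restrict (ae_of_all _ fun x => ?_)
  simpa [Real.norm_eq_abs] using hC x

lemma aq_key {q r : ℝ} (hq1 : 1 < q) (hq2 : q ≤ 2) (hr0 : 0 ≤ r) (hr1 : r ≤ 1)
    {x y : ℝ} (hxy : |x| ≤ y) (hy1 : y ≤ 1) :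
    (1 + r^2 - 2*r*y) ^ (q-1) + (1 + r^2 + 2*r*y) ^ (q-1) ≤
      (1 + r^2 - 2*r*x) ^ (q-1) + (1 + r^2 + 2*r*x) ^ (q-1) := by
  have hy0 : 0 ≤ y := le_trans (abs_nonneg x) hxy
  set m : ℝ := 1 + r ^ 2 with hm
  set p : ℝ := q - 1 with hp
  have hp0 : 0 < p := by rw [hp]; linarith
  have hp1 : p ≤ 1 := by rw [hp]; linarith
  have hm0 : (0:ℝ) < m := by rw [hm]; positivity
  have h2rm : 2 * r ≤ m := by rw [hm]; nlinarith [sq_nonneg (1 - r)]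
  set F : ℝ → ℝ := fun d => (m - d) ^ p + (m + d) ^ p with hFdef
  have hanti : AntitoneOn F (Set.Icc 0 m) := by
    have hder : ∀ d ∈ Set.Ioo (0:ℝ) m,
        HasDerivAt F (p * (m - d) ^ (p - 1) * (-1) + p * (m + d) ^ (p - 1) * 1) d := by
      intro d hd
      have hmd : (0:ℝ) < m - d := by linarith [hd.2]
      have hpd : (0:ℝ) < m + d := by linarith [hd.1]
      have h1 : HasDerivAt (fun e : ℝ => m - e) (-1) d := by
        simpa using (hasDerivAt_id d).const_sub m
      have h2 : HasDerivAt (fun e : ℝ => m + e) (1:ℝ) d := by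
        simpa using (hasDerivAt_id d).const_add m
      have hA := (Real.hasDerivAt_rpow_const (x := m - d) (p := p)
        (Or.inl (ne_of_gt hmd))).comp d h1
      have hB := (Real.hasDerivAt_rpow_const (x := m + d) (p := p)
        (Or.inl (ne_of_gt hpd))).comp d h2
      exact hA.add hB
    apply antitoneOn_of_deriv_nonpos (convex_Icc 0 m)
    · -- continuity
      intro d _
      have c1 : Continuous fun d : ℝ => m - d := by continuity
      have c2 : Continuous fun d : ℝ => m + d := by continuity
      exact (((Real.continuousAt_rpow_const _ p (Or.inr hp0.le)).comp
        c1.continuousAt).add ((Real.continuousAt_rpow_const _ p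
        (Or.inr hp0.le)).comp c2.continuousAt)).continuousWithinAt
    · rw [interior_Icc]
      intro d hd
      exact ((hder d hd).differentiableAt).differentiableWithinAt
    · rw [interior_Icc]
      intro d hd
      rw [(hder d hd).deriv]
      have hmd : (0:ℝ) < m - d := by linarith [hd.2]
      have hkey : (m + d) ^ (p - 1) ≤ (m - d) ^ (p - 1) :=
        Real.rpow_le_rpow_of_nonpos hmd (by linarith [hd.1]) (by linarith)
      nlinarith [mul_le_mul_of_nonneg_left hkey hp0.le]
  have hmem1 : 2 * r * |x| ∈ Set.Icc (0:ℝ) m := by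
    constructor
    · positivity
    · nlinarith [abs_nonneg x]
  have hmem2 : 2 * r * y ∈ Set.Icc (0:ℝ) m := by
    constructor
    · positivity
    · nlinarith
  have happ : F (2 * r * y) ≤ F (2 * r * |x|) :=
    hanti hmem1 hmem2 (by nlinarith)
  rw [hFdef] at happ
  simp only at happ
  rcases abs_cases x with ⟨hx, _⟩ | ⟨hx, _⟩
  · rw [hx] at happ
    exact happ
  · rw [hx] at happ
    rw [show m - 2 * r * -x = m + 2 * r * x by ring,
      show m + 2 * r * -x = m - 2 * r * x by ring] at happ
    linarith

lemma aq_pointwise {q r : ℝ} (hq1 : 1 < q) (hq2 : q ≤ 2) (hr0 : 0 ≤ r) (hr1 : r ≤ 1)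
    {t u : ℝ} (ht : t ∈ Set.Icc 0 (π/2)) (hu : u ∈ Set.Icc 0 (π/2)) :
    0 ≤ aqG q u * aqW q r (u + t) + aqG q (-u) * aqW q r (-u + t) +
      aqG q (π - u) * aqW q r (π - u + t) + aqG q (u - π) * aqW q r (u - π + t) := by
  rw [aqG_neg, aqG_pi_sub, aqG_sub_pi]
  have hW1 : aqW q r (u + t) = (1 + r^2 - 2*r*Real.cos (u + t)) ^ (q-1) := rfl
  have hW4 : aqW q r (u - π + t) = (1 + r^2 + 2*r*Real.cos (u + t)) ^ (q-1) := by
    unfold aqW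
    rw [show u - π + t = (u + t) - π by ring, Real.cos_sub_pi]
    ring_nf
  have hW2 : aqW q r (-u + t) = (1 + r^2 - 2*r*Real.cos (u - t)) ^ (q-1) := by
    unfold aqW
    rw [show -u + t = -(u - t) by ring, Real.cos_neg]
  have hW3 : aqW q r (π - u + t) = (1 + r^2 + 2*r*Real.cos (u - t)) ^ (q-1) := by
    unfold aqW
    rw [show π - u + t = π - (u - t) by ring, Real.cos_pi_sub]
    ring_nf
  rw [hW1, hW2, hW3, hW4]
  have hcu : 0 ≤ Real.cos u := Real.cos_nonneg_of_mem_Icc ⟨by linarith [hu.1, Real.pi_pos], hu.2⟩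
  have hct : 0 ≤ Real.cos t := Real.cos_nonneg_of_mem_Icc ⟨by linarith [ht.1, Real.pi_pos], ht.2⟩
  have hsu : 0 ≤ Real.sin u := Real.sin_nonneg_of_nonneg_of_le_pi hu.1 (by linarith [hu.2, Real.pi_pos])
  have hst : 0 ≤ Real.sin t := Real.sin_nonneg_of_nonneg_of_le_pi ht.1 (by linarith [ht.2, Real.pi_pos])
  have habs : |Real.cos (u + t)| ≤ Real.cos (u - t) := by
    rw [abs_le, Real.cos_add, Real.cos_sub]
    constructor
    · nlinarith [mul_nonneg hcu hct]
    · nlinarith [mul_nonneg hsu hst]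
  have hc1 : Real.cos (u - t) ≤ 1 := Real.cos_le_one _
  have hkey := aq_key (x := Real.cos (u + t)) (y := Real.cos (u - t)) hq1 hq2 hr0 hr1 habs hc1
  have hg : 0 ≤ aqG q u := aqG_nonneg (by linarith) hu
  nlinarith [mul_le_mul_of_nonneg_left hkey hg]

lemma aqFw_meas {q r : ℝ} (hq1 : 1 < q) (t : ℝ) :
    Measurable fun u => aqG q u * aqW q r (u + t) :=
  aqG_meas.mul ((aqW_continuous hq1).measurable.comp (measurable_id.add_const t))

lemma aqFw_bdd {q r : ℝ} (hq1 : 1 < q) (hq2 : q ≤ 2) (hr0 : 0 ≤ r) (hr1 : r ≤ 1) (t : ℝ)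
    (x : ℝ) : |aqG q x * aqW q r (x + t)| ≤ q * 4 := by
  rw [abs_mul]
  apply mul_le_mul (aqG_abs_le hq1 x) _ (abs_nonneg _) (by linarith)
  rw [abs_of_nonneg (aqW_nonneg hr0 _)]
  exact aqW_le_four hq1 hq2 hr0 hr1 _

lemma aqJ_nonneg {q r : ℝ} (hq1 : 1 < q) (hq2 : q ≤ 2) (hr0 : 0 ≤ r) (hr1 : r ≤ 1)
    {t : ℝ} (ht : t ∈ Set.Icc 0 (π/2)) :
    0 ≤ ∫ s in (-π)..π, aqG q (s - t) * aqW q r s := by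
  set F : ℝ → ℝ := fun u => aqG q u * aqW q r (u + t) with hFdef
  have hFm : Measurable F := aqFw_meas hq1 t
  have hint : ∀ a b : ℝ, IntervalIntegrable F volume a b := fun a b =>
    aq_meas_bdd_intervalIntegrable F hFm (q * 4) (aqFw_bdd hq1 hq2 hr0 hr1 t) a b
  -- step a : substitution s = u + t
  have h1 : (∫ s in (-π)..π, aqG q (s - t) * aqW q r s)
      = ∫ u in (-π - t)..(π - t), F u := by
    rw [← intervalIntegral.integral_comp_sub_right F t]
    apply intervalIntegral.integral_congr
    intro s _
    simp only [hFdef, sub_add_cancel]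
  -- step b : periodicity
  have hper : Function.Periodic F (2 * π) := by
    intro u
    simp only [hFdef]
    have e1 : aqG q (u + 2 * π) = aqG q u := by
      unfold aqG
      rw [Real.cos_add_two_pi, Real.sin_add_two_pi]
    have e2 : aqW q r (u + 2 * π + t) = aqW q r (u + t) := by
      unfold aqW
      rw [show u + 2 * π + t = (u + t) + 2 * π by ring, Real.cos_add_two_pi]
    rw [e1, e2]
  have h2 : (∫ u in (-π - t)..(π - t), F u) = ∫ u in (-π)..π, F u := by
    have := hper.intervalIntegral_add_eq (-π - t) (-π)
    rw [show -π - t + 2 * π = π - t by ring, show -π + 2 * π = π by ring] at this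
    exact this
  -- step c : split into four
  have hsplit : (∫ u in (-π)..π, F u) =
      (∫ u in (-π)..(-π/2), F u) + (∫ u in (-π/2)..(0:ℝ), F u) +
      ((∫ u in (0:ℝ)..(π/2), F u) + ∫ u in (π/2)..π, F u) := by
    rw [intervalIntegral.integral_add_adjacent_intervals (hint (-π) (-π/2)) (hint (-π/2) 0),
      intervalIntegral.integral_add_adjacent_intervals (hint 0 (π/2)) (hint (π/2) π),
      intervalIntegral.integral_add_adjacent_intervals (hint (-π) 0) (hint 0 π)]
  -- transforms
  have T1 : (∫ u in (-π)..(-π/2), F u) = ∫ u in (0:ℝ)..(π/2), F (u - π) := by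
    have := intervalIntegral.integral_comp_sub_right (a := (0:ℝ)) (b := π/2) F π
    rw [show (0:ℝ) - π = -π by ring, show π/2 - π = -π/2 by ring] at this
    exact this.symm
  have T2 : (∫ u in (-π/2)..(0:ℝ), F u) = ∫ u in (0:ℝ)..(π/2), F (-u) := by
    have := intervalIntegral.integral_comp_neg (a := (0:ℝ)) (b := π/2) F
    rw [show -(0:ℝ) = 0 by ring, show -(π/2) = -π/2 by ring] at this
    exact this.symm
  have T3 : (∫ u in (π/2)..π, F u) = ∫ u in (0:ℝ)..(π/2), F (π - u) := by
    have := intervalIntegral.integral_comp_sub_left (a := (0:ℝ)) (b := π/2) F π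
    rw [show π - (0:ℝ) = π by ring, show π - π/2 = π/2 by ring] at this
    exact this.symm
  -- integrability of transforms
  have hi1 : IntervalIntegrable (fun u => F (u - π)) volume 0 (π/2) :=
    aq_meas_bdd_intervalIntegrable _ (hFm.comp (measurable_id.sub_const π)) (q*4)
      (fun x => aqFw_bdd hq1 hq2 hr0 hr1 t _) _ _
  have hi2 : IntervalIntegrable (fun u => F (-u)) volume 0 (π/2) :=
    aq_meas_bdd_intervalIntegrable _ (hFm.comp measurable_neg) (q*4)
      (fun x => aqFw_bdd hq1 hq2 hr0 hr1 t _) _ _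
  have hi3 : IntervalIntegrable (fun u => F (π - u)) volume 0 (π/2) :=
    aq_meas_bdd_intervalIntegrable _ (hFm.comp (measurable_const.sub measurable_id)) (q*4)
      (fun x => aqFw_bdd hq1 hq2 hr0 hr1 t _) _ _
  have hi0 : IntervalIntegrable F volume 0 (π/2) := hint 0 (π/2)
  have hcomb : (∫ u in (0:ℝ)..(π/2), (F u + F (-u) + F (π - u) + F (u - π)))
      = (∫ u in (0:ℝ)..(π/2), F u) + (∫ u in (0:ℝ)..(π/2), F (-u)) +
        ((∫ u in (0:ℝ)..(π/2), F (π - u)) + ∫ u in (0:ℝ)..(π/2), F (u - π)) := by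
    have e : (fun u => F u + F (-u) + F (π - u) + F (u - π))
        = fun u => (F u + F (-u)) + (F (π - u) + F (u - π)) := by funext u; ring
    rw [e, intervalIntegral.integral_add (hi0.add hi2) (hi3.add hi1),
      intervalIntegral.integral_add hi0 hi2, intervalIntegral.integral_add hi3 hi1]
  have hfinal : (∫ s in (-π)..π, aqG q (s - t) * aqW q r s)
      = ∫ u in (0:ℝ)..(π/2), (F u + F (-u) + F (π - u) + F (u - π)) := by
    rw [h1, h2, hsplit, T1, T2, T3, hcomb]
    ring
  rw [hfinal]
  apply intervalIntegral.integral_nonneg (by linarith [Real.pi_pos])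
  intro u hu
  have hu' : u ∈ Set.Icc 0 (π/2) := hu
  have := aq_pointwise hq1 hq2 hr0 hr1 ht hu'
  simpa [hFdef] using this

lemma aqA_mono {q r : ℝ} (hq1 : 1 < q) (hq2 : q ≤ 2) (hr0 : 0 ≤ r) (hr1 : r ≤ 1)
    {t1 t2 : ℝ} (h0 : 0 ≤ t1) (h12 : t1 ≤ t2) (h2 : t2 ≤ π/2) :
    aqA q r t1 ≤ aqA q r t2 := by
  have hWc : Continuous (aqW q r) := aqW_continuous hq1
  have hcont : ∀ t : ℝ, Continuous fun s => |Real.cos (s - t)| ^ q * aqW q r s := by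
    intro t
    exact ((aqF_continuous hq1).comp (continuous_id.sub continuous_const)).mul hWc
  have hsub : aqA q r t2 - aqA q r t1
      = ∫ s in (-π)..π, (|Real.cos (s - t2)| ^ q - |Real.cos (s - t1)| ^ q) * aqW q r s := by
    unfold aqA
    rw [← intervalIntegral.integral_sub ((hcont t2).intervalIntegrable _ _)
      ((hcont t1).intervalIntegrable _ _)]
    apply intervalIntegral.integral_congr
    intro s _
    ring
  have hFTC : ∀ s : ℝ, |Real.cos (s - t2)| ^ q - |Real.cos (s - t1)| ^ q
      = ∫ τ in t1..t2, aqG q (s - τ) := by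
    intro s
    have hder : ∀ τ ∈ Set.uIcc t1 t2,
        HasDerivAt (fun τ : ℝ => |Real.cos (s - τ)| ^ q) (aqG q (s - τ)) τ := by
      intro τ _
      have h1 : HasDerivAt (fun τ : ℝ => s - τ) (-1) τ := by
        simpa using (hasDerivAt_id τ).const_sub s
      have h2 := (aqF_hasDeriv hq1 (s - τ)).comp τ h1
      simpa [Function.comp_def] using h2
    have hintg : IntervalIntegrable (fun τ => aqG q (s - τ)) volume t1 t2 :=
      aq_meas_bdd_intervalIntegrable _ (aqG_meas.comp (measurable_const.sub measurable_id)) q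
        (fun x => aqG_abs_le hq1 _) _ _
    have := intervalIntegral.integral_eq_sub_of_hasDerivAt hder hintg
    rw [this]
  have hstep : aqA q r t2 - aqA q r t1
      = ∫ s in (-π)..π, ∫ τ in t1..t2, aqG q (s - τ) * aqW q r s := by
    rw [hsub]
    apply intervalIntegral.integral_congr
    intro s _
    show (|Real.cos (s - t2)| ^ q - |Real.cos (s - t1)| ^ q) * aqW q r s
      = ∫ τ in t1..t2, aqG q (s - τ) * aqW q r s
    rw [hFTC s, ← intervalIntegral.integral_mul_const]
  -- Fubini
  have hle1 : (-π : ℝ) ≤ π := by linarith [Real.pi_pos]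
  have hswap : (∫ s in (-π)..π, ∫ τ in t1..t2, aqG q (s - τ) * aqW q r s)
      = ∫ τ in t1..t2, ∫ s in (-π)..π, aqG q (s - τ) * aqW q r s := by
    rw [intervalIntegral.integral_of_le hle1, intervalIntegral.integral_of_le h12]
    simp_rw [intervalIntegral.integral_of_le h12, intervalIntegral.integral_of_le hle1]
    apply MeasureTheory.integral_integral_swap
    have hmeas : Measurable (Function.uncurry fun s τ => aqG q (s - τ) * aqW q r s) :=
      (aqG_meas.comp (measurable_fst.sub measurable_snd)).mul
        (hWc.measurable.comp measurable_fst)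
    haveI i1 : IsFiniteMeasure (volume.restrict (Set.Ioc (-π) π)) :=
      ⟨by rw [Measure.restrict_apply_univ]; exact measure_Ioc_lt_top⟩
    haveI i2 : IsFiniteMeasure (volume.restrict (Set.Ioc t1 t2)) :=
      ⟨by rw [Measure.restrict_apply_univ]; exact measure_Ioc_lt_top⟩
    refine Integrable.mono' (g := fun _ => q * 4) (integrable_const _)
      hmeas.aestronglyMeasurable (ae_of_all _ fun p => ?_)
    rw [Real.norm_eq_abs, Function.uncurry]
    rw [abs_mul]
    apply mul_le_mul (aqG_abs_le hq1 _) _ (abs_nonneg _) (by linarith)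
    rw [abs_of_nonneg (aqW_nonneg hr0 _)]
    exact aqW_le_four hq1 hq2 hr0 hr1 _
  have hnn : 0 ≤ ∫ τ in t1..t2, ∫ s in (-π)..π, aqG q (s - τ) * aqW q r s := by
    apply intervalIntegral.integral_nonneg h12
    intro τ hτ
    exact aqJ_nonneg hq1 hq2 hr0 hr1 ⟨le_trans h0 hτ.1, le_trans hτ.2 h2⟩
  rw [← hswap] at hnn
  rw [← hstep] at hnn
  linarith

lemma aqW_even {q r : ℝ} (s : ℝ) : aqW q r (-s) = aqW q r s := by
  unfold aqW; rw [Real.cos_neg]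

lemma aqA_even {q r : ℝ} (t : ℝ) : aqA q r (-t) = aqA q r t := by
  unfold aqA
  have key := intervalIntegral.integral_comp_neg (a := -π) (b := π)
    (fun s => |Real.cos (s - -t)| ^ q * aqW q r s)
  rw [neg_neg] at key
  rw [← key]
  apply intervalIntegral.integral_congr
  intro s _
  simp only
  rw [aqW_even, show -s - -t = -(s - t) by ring, Real.cos_neg]

lemma aqA_per {q r : ℝ} : Function.Periodic (aqA q r) π := by
  intro t
  unfold aqA
  apply intervalIntegral.integral_congr
  intro s _
  simp only
  rw [show s - (t + π) = (s - t) - π by ring, Real.cos_sub_pi, abs_neg]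

theorem aq_extrema_aux {q r : ℝ} (hq1 : 1 < q) (hq2 : q ≤ 2) (hr0 : 0 ≤ r) (hr1 : r ≤ 1)
    (t : ℝ) : aqA q r 0 ≤ aqA q r t ∧ aqA q r t ≤ aqA q r (π/2) := by
  obtain ⟨t', ht'0, ht'2, ht'eq⟩ : ∃ t', 0 ≤ t' ∧ t' ≤ π/2 ∧ aqA q r t' = aqA q r t := by
    set t0 := toIcoMod Real.pi_pos 0 t with ht0def
    have hmem : t0 ∈ Set.Ico 0 (0 + π) := toIcoMod_mem_Ico Real.pi_pos 0 t
    have hsub : t - t0 = toIcoDiv Real.pi_pos 0 t • π := self_sub_toIcoMod Real.pi_pos 0 t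
    have hA0 : aqA q r t0 = aqA q r t := by
      have h1 : t0 = t - toIcoDiv Real.pi_pos 0 t • π := by linarith
      rw [h1]
      exact aqA_per.sub_zsmul_eq _
    rcases le_or_gt t0 (π/2) with h | h
    · exact ⟨t0, hmem.1, h, hA0⟩
    · refine ⟨π - t0, by linarith [hmem.2], by linarith, ?_⟩
      have e1 : π - t0 = -(t0 - π) := by ring
      rw [e1, aqA_even, aqA_per.sub_eq, hA0]
  constructor
  · rw [← ht'eq]
    exact aqA_mono hq1 hq2 hr0 hr1 le_rfl ht'0 ht'2
  · rw [← ht'eq]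
    exact aqA_mono hq1 hq2 hr0 hr1 ht'0 ht'2 le_rfl

theorem aq_extrema_q_le_two (q r : ℝ) (hq1 : 1 < q) (hq2 : q ≤ 2)
    (hr0 : 0 ≤ r) (hr1 : r ≤ 1) (t : ℝ) :
    (∫ s in (-π)..π, |Real.cos (s - 0)| ^ q *
        (1 + r ^ 2 - 2 * r * Real.cos s) ^ (q - 1)) ≤
      (∫ s in (-π)..π, |Real.cos (s - t)| ^ q *
        (1 + r ^ 2 - 2 * r * Real.cos s) ^ (q - 1)) ∧
    (∫ s in (-π)..π, |Real.cos (s - t)| ^ q *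
        (1 + r ^ 2 - 2 * r * Real.cos s) ^ (q - 1)) ≤
      (∫ s in (-π)..π, |Real.cos (s - π / 2)| ^ q *
        (1 + r ^ 2 - 2 * r * Real.cos s) ^ (q - 1)) := by
  exact aq_extrema_aux hq1 hq2 hr0 hr1 t
end

section
/- Let q ≥ 2 and 0 ≤ r ≤ 1. Then for all t ∈ ℝ, a_q(π/2) ≤ a_q(t) ≤ a_q(0), where a_q(t) = ∫_{-π}^{π} |cos(s-t)|^q (1 + r² - 2r cos s)^{q-1} ds. -/
open Real intervalIntegral MeasureTheory

section Aux

variable {q r : ℝ}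

private lemma w_nonneg (hr0 : 0 ≤ r) (hr1 : r ≤ 1) (s : ℝ) :
    0 ≤ 1 + r ^ 2 - 2 * r * Real.cos s := by
  nlinarith [Real.cos_le_one s, mul_nonneg hr0 (sub_nonneg.2 (Real.cos_le_one s)),
    sq_nonneg (1 - r)]

private lemma w_le_four (hr0 : 0 ≤ r) (hr1 : r ≤ 1) (s : ℝ) :
    1 + r ^ 2 - 2 * r * Real.cos s ≤ 4 := by
  nlinarith [Real.neg_one_le_cos s, mul_nonneg hr0 (by linarith [Real.neg_one_le_cos s] :
    (0:ℝ) ≤ Real.cos s + 1)]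

/-- shift a `2π`-periodic function's integral over `[-π, π]`. -/
private lemma integral_shift (f : ℝ → ℝ) (hper : Function.Periodic f (2 * π)) (t : ℝ) :
    (∫ u in (-π)..π, f (u + t)) = ∫ s in (-π)..π, f s := by
  rw [intervalIntegral.integral_comp_add_right]
  have h := hper.intervalIntegral_add_eq (-π + t) (-π)
  rw [show (-π + t) + 2 * π = π + t by ring, show -π + 2 * π = π by ring] at h
  exact h

end Aux

noncomputable def aqAfun (q r x : ℝ) : ℝ :=
  ∫ s in (-π)..π, |Real.cos (s - x)| ^ q * (1 + r ^ 2 - 2 * r * Real.cos s) ^ (q - 1)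

noncomputable def aqBfun (q r x : ℝ) : ℝ :=
  ∫ u in (-π)..π, |Real.cos u| ^ q * (1 + r ^ 2 - 2 * r * Real.cos (u + x)) ^ (q - 1)

theorem aq_extrema_q_ge_two (q r : ℝ) (hq : 2 ≤ q)
    (hr0 : 0 ≤ r) (hr1 : r ≤ 1) (t : ℝ) :
    (∫ s in (-π)..π, |Real.cos (s - π / 2)| ^ q *
        (1 + r ^ 2 - 2 * r * Real.cos s) ^ (q - 1)) ≤
      (∫ s in (-π)..π, |Real.cos (s - t)| ^ q *
        (1 + r ^ 2 - 2 * r * Real.cos s) ^ (q - 1)) ∧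
    (∫ s in (-π)..π, |Real.cos (s - t)| ^ q *
        (1 + r ^ 2 - 2 * r * Real.cos s) ^ (q - 1)) ≤
      (∫ s in (-π)..π, |Real.cos (s - 0)| ^ q *
        (1 + r ^ 2 - 2 * r * Real.cos s) ^ (q - 1)) := by
  set A : ℝ → ℝ := aqAfun q r with hA
  set B : ℝ → ℝ := aqBfun q r with hB
  have hAB : ∀ x, A x = B x := by
    intro x
    have hper : Function.Periodic
        (fun s => |Real.cos (s - x)| ^ q * (1 + r ^ 2 - 2 * r * Real.cos s) ^ (q - 1))
        (2 * π) := by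
      intro s
      simp only [show s + 2 * π - x = (s - x) + 2 * π from by ring, Real.cos_add_two_pi]
    have h := integral_shift _ hper x
    simp only [add_sub_cancel_right] at h
    exact h.symm
  -- derivative of B
  have hDB : ∀ x : ℝ, HasDerivAt B
      (∫ u in (-π)..π, |Real.cos u| ^ q *
        ((q - 1) * (1 + r ^ 2 - 2 * r * Real.cos (u + x)) ^ (q - 2) *
          (2 * r * Real.sin (u + x)))) x := by
    intro x
    have h := intervalIntegral.hasDerivAt_integral_of_dominated_loc_of_deriv_le
      (F := fun x u => |Real.cos u| ^ q * (1 + r ^ 2 - 2 * r * Real.cos (u + x)) ^ (q - 1))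
      (F' := fun x u => |Real.cos u| ^ q *
        ((q - 1) * (1 + r ^ 2 - 2 * r * Real.cos (u + x)) ^ (q - 2) * (2 * r * Real.sin (u + x))))
      (bound := fun _ => 2 * (q - 1) * 4 ^ (q - 2))
      (μ := volume) (a := -π) (b := π) (x₀ := x) (s := Set.univ) Filter.univ_mem
      ?_ ?_ ?_ ?_ ?_ ?_
    · exact h.2
    · refine Filter.Eventually.of_forall fun y => Continuous.aestronglyMeasurable ?_
      fun_prop (disch := norm_num; linarith)
    · apply Continuous.intervalIntegrable
      fun_prop (disch := norm_num; linarith)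
    · refine Continuous.aestronglyMeasurable ?_
      fun_prop (disch := norm_num; linarith)
    · refine Filter.Eventually.of_forall fun u => fun _ => fun y _ => ?_
      have h1 : |Real.cos u| ^ q ≤ 1 :=
        Real.rpow_le_one (abs_nonneg _) (abs_cos_le_one u) (by linarith)
      have h1' : (0:ℝ) ≤ |Real.cos u| ^ q := Real.rpow_nonneg (abs_nonneg _) _
      have hw0 : (0:ℝ) ≤ 1 + r ^ 2 - 2 * r * Real.cos (u + y) := w_nonneg hr0 hr1 _
      have h2 : (1 + r ^ 2 - 2 * r * Real.cos (u + y)) ^ (q - 2) ≤ 4 ^ (q - 2) :=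
        Real.rpow_le_rpow hw0 (w_le_four hr0 hr1 _) (by linarith)
      have h2' : (0:ℝ) ≤ (1 + r ^ 2 - 2 * r * Real.cos (u + y)) ^ (q - 2) :=
        Real.rpow_nonneg hw0 _
      have h3 : |Real.sin (u + y)| ≤ 1 := abs_sin_le_one _
      have h4 : (0:ℝ) ≤ 4 ^ (q - 2) := Real.rpow_nonneg (by norm_num) _
      rw [Real.norm_eq_abs, abs_mul, abs_mul, abs_mul, abs_mul,
        abs_of_nonneg h1', abs_of_nonneg (show (0:ℝ) ≤ q - 1 by linarith),
        abs_of_nonneg h2', abs_of_nonneg (show (0:ℝ) ≤ 2 * r by linarith)]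
      calc |Real.cos u| ^ q * ((q - 1) * (1 + r ^ 2 - 2 * r * Real.cos (u + y)) ^ (q - 2) *
              (2 * r * |Real.sin (u + y)|))
          ≤ 1 * ((q - 1) * 4 ^ (q - 2) * (2 * 1 * 1)) := by
            gcongr <;> first
              | linarith
              | exact mul_nonneg (mul_nonneg (by linarith) h2') (by positivity)
              | exact mul_nonneg (by linarith) h4
        _ = 2 * (q - 1) * 4 ^ (q - 2) := by ring
    · exact intervalIntegrable_const
    · refine Filter.Eventually.of_forall fun u => fun _ => fun y _ => ?_
      have hc : HasDerivAt (fun y : ℝ => 1 + r ^ 2 - 2 * r * Real.cos (u + y))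
          (2 * r * Real.sin (u + y)) y := by
        have hcos : HasDerivAt (fun y : ℝ => Real.cos (u + y)) (-Real.sin (u + y)) y := by
          simpa [Function.comp_def] using (Real.hasDerivAt_cos (u + y)).comp y ((hasDerivAt_id y).const_add u)
        have := (hcos.const_mul (2 * r)).const_sub (1 + r ^ 2)
        rw [show 2 * r * Real.sin (u + y) = -(2 * r * -Real.sin (u + y)) by ring]
        exact this
      have hp : HasDerivAt (fun z : ℝ => z ^ (q - 1))
          ((q - 1) * (1 + r ^ 2 - 2 * r * Real.cos (u + y)) ^ (q - 2))
          (1 + r ^ 2 - 2 * r * Real.cos (u + y)) := by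
        have := Real.hasDerivAt_rpow_const
          (x := 1 + r ^ 2 - 2 * r * Real.cos (u + y)) (p := q - 1) (Or.inr (by linarith))
        rwa [show q - 1 - 1 = q - 2 by ring] at this
      have := (hp.comp y hc).const_mul (|Real.cos u| ^ q)
      exact this

  -- the derivative is nonpositive on [0, π/2]
  have hDnonpos : ∀ x ∈ Set.Icc (0:ℝ) (π/2),
      (∫ u in (-π)..π, |Real.cos u| ^ q *
        ((q - 1) * (1 + r ^ 2 - 2 * r * Real.cos (u + x)) ^ (q - 2) *
          (2 * r * Real.sin (u + x)))) ≤ 0 := by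
    intro x hx
    set f : ℝ → ℝ := fun s => |Real.cos (s - x)| ^ q *
        ((q - 1) * (1 + r ^ 2 - 2 * r * Real.cos s) ^ (q - 2) * (2 * r * Real.sin s)) with hf
    have hcont : Continuous f := by
      rw [hf]; fun_prop (disch := norm_num; linarith)
    have hper : Function.Periodic f (2 * π) := by
      intro s
      simp only [hf, show s + 2 * π - x = (s - x) + 2 * π from by ring, Real.cos_add_two_pi,
        Real.sin_add_two_pi]
    have h0 : (∫ u in (-π)..π, |Real.cos u| ^ q *
          ((q - 1) * (1 + r ^ 2 - 2 * r * Real.cos (u + x)) ^ (q - 2) *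
            (2 * r * Real.sin (u + x)))) = ∫ s in (-π)..π, f s := by
      rw [← integral_shift f hper x]
      refine intervalIntegral.integral_congr fun u _ => ?_
      simp only [hf, add_sub_cancel_right]
    rw [h0]
    have hint : ∀ a b : ℝ, IntervalIntegrable f volume a b := fun a b =>
      hcont.intervalIntegrable a b
    have h1 : (∫ s in (-π)..π, f s) = (∫ s in (-π)..(0:ℝ), f s) + ∫ s in (0:ℝ)..π, f s :=
      (intervalIntegral.integral_add_adjacent_intervals (hint _ _) (hint _ _)).symm
    have h2 : (∫ s in (0:ℝ)..π, f (-s)) = ∫ s in (-π)..(0:ℝ), f s := by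
      have h := intervalIntegral.integral_comp_neg f (a := (0:ℝ)) (b := π)
      rwa [neg_zero] at h
    have h3 : (∫ s in (0:ℝ)..π, f (-s)) + (∫ s in (0:ℝ)..π, f s)
        = ∫ s in (0:ℝ)..π, (f (-s) + f s) :=
      (intervalIntegral.integral_add ((hcont.comp continuous_neg).intervalIntegrable _ _)
        (hint _ _)).symm
    set g : ℝ → ℝ := fun s => f (-s) + f s with hg
    have hgcont : Continuous g := (hcont.comp continuous_neg).add hcont
    have h4 : (∫ s in (0:ℝ)..π, g s) = (∫ s in (0:ℝ)..(π/2), g s) + ∫ s in (π/2)..π, g s :=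
      (intervalIntegral.integral_add_adjacent_intervals (hgcont.intervalIntegrable _ _)
        (hgcont.intervalIntegrable _ _)).symm
    have h5 : (∫ s in (0:ℝ)..(π/2), g (π - s)) = ∫ s in (π/2)..π, g s := by
      have h := intervalIntegral.integral_comp_sub_left g π (a := (0:ℝ)) (b := π/2)
      rwa [show π - π/2 = π/2 from by ring, sub_zero] at h
    have h6 : (∫ s in (0:ℝ)..(π/2), g s) + (∫ s in (0:ℝ)..(π/2), g (π - s))
        = ∫ s in (0:ℝ)..(π/2), (g s + g (π - s)) :=
      (intervalIntegral.integral_add (hgcont.intervalIntegrable _ _)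
        ((hgcont.comp (continuous_const.sub continuous_id)).intervalIntegrable _ _)).symm
    have key : ∀ s ∈ Set.Icc (0:ℝ) (π/2), g s + g (π - s) ≤ 0 := by
      intro s hs
      have hs0 := hs.1; have hs2 := hs.2
      have hx0 := hx.1; have hx2 := hx.2
      have hsin : 0 ≤ Real.sin s := Real.sin_nonneg_of_nonneg_of_le_pi hs0 (by linarith [pi_pos])
      have hsint : 0 ≤ Real.sin x := Real.sin_nonneg_of_nonneg_of_le_pi hx0 (by linarith [pi_pos])
      have hcoss : 0 ≤ Real.cos s := Real.cos_nonneg_of_mem_Icc ⟨by linarith, hs2⟩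
      have hcosx : 0 ≤ Real.cos x := Real.cos_nonneg_of_mem_Icc ⟨by linarith, hx2⟩
      have habs : |Real.cos (s + x)| ≤ |Real.cos (s - x)| := by
        refine le_trans (abs_le.2 ⟨?_, ?_⟩) (le_abs_self _)
        · rw [Real.cos_add, Real.cos_sub]; nlinarith [mul_nonneg hcoss hcosx]
        · rw [Real.cos_add, Real.cos_sub]; nlinarith [mul_nonneg hsin hsint]
      have hA : |Real.cos (s + x)| ^ q ≤ |Real.cos (s - x)| ^ q :=
        Real.rpow_le_rpow (abs_nonneg _) habs (by linarith)
      have hW : (1 + r ^ 2 - 2 * r * Real.cos s) ^ (q - 2)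
          ≤ (1 + r ^ 2 - 2 * r * Real.cos (π - s)) ^ (q - 2) := by
        refine Real.rpow_le_rpow (w_nonneg hr0 hr1 s) ?_ (by linarith)
        rw [Real.cos_pi_sub]; nlinarith [mul_nonneg hr0 hcoss]
      have hfact : 0 ≤ (2 * r * ((q - 1) * Real.sin s)) *
          ((|Real.cos (s - x)| ^ q - |Real.cos (s + x)| ^ q) *
            ((1 + r ^ 2 - 2 * r * Real.cos (π - s)) ^ (q - 2)
              - (1 + r ^ 2 - 2 * r * Real.cos s) ^ (q - 2))) :=
        mul_nonneg (mul_nonneg (by linarith) (mul_nonneg (by linarith) hsin))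
          (mul_nonneg (by linarith) (by linarith))
      have e1 : Real.cos (-s - x) = Real.cos (s + x) := by
        rw [show -s - x = -(s + x) by ring, Real.cos_neg]
      have e2 : Real.cos (π - s - x) = -Real.cos (s + x) := by
        rw [show π - s - x = π - (s + x) by ring, Real.cos_pi_sub]
      have e3 : Real.cos (-(π - s) - x) = -Real.cos (s - x) := by
        rw [show -(π - s) - x = -(π - (s - x)) by ring, Real.cos_neg, Real.cos_pi_sub]
      simp only [hg, hf, e1, e2, e3, Real.cos_neg, Real.sin_neg, Real.sin_pi_sub, abs_neg]
      linarith [hfact]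
    have final : (∫ s in (0:ℝ)..(π/2), (g s + g (π - s))) ≤ 0 := by
      have hnn : 0 ≤ ∫ s in (0:ℝ)..(π/2), -(g s + g (π - s)) := by
        refine intervalIntegral.integral_nonneg (by positivity) fun u hu => ?_
        have := key u hu
        linarith
      rw [intervalIntegral.integral_neg] at hnn
      linarith
    linarith [h1, h2, h3, h4, h5, h6, final]
  have hBanti : AntitoneOn B (Set.Icc (0:ℝ) (π/2)) := by
    refine antitoneOn_of_deriv_nonpos (convex_Icc _ _) ?_ ?_ ?_
    · exact fun y _ => ((hDB y).continuousAt).continuousWithinAt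
    · exact fun y _ => ((hDB y).differentiableAt).differentiableWithinAt
    · intro y hy
      rw [interior_Icc] at hy
      rw [(hDB y).deriv]
      exact hDnonpos y ⟨hy.1.le, hy.2.le⟩
  have hAanti : AntitoneOn A (Set.Icc (0:ℝ) (π/2)) := fun a ha b hb hab => by
    rw [hAB, hAB]; exact hBanti ha hb hab
  have hperA : Function.Periodic A π := by
    intro y
    refine intervalIntegral.integral_congr fun s _ => ?_
    rw [show s - (y + π) = (s - y) - π from by ring, Real.cos_sub_pi, abs_neg]
  have heven : ∀ y, A (-y) = A y := by
    intro y
    have h := intervalIntegral.integral_comp_neg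
      (fun s => |Real.cos (s - y)| ^ q * (1 + r ^ 2 - 2 * r * Real.cos s) ^ (q - 1))
      (a := -π) (b := π)
    rw [neg_neg] at h
    calc A (-y) = ∫ s in (-π)..π,
          |Real.cos (-s - y)| ^ q * (1 + r ^ 2 - 2 * r * Real.cos (-s)) ^ (q - 1) := by
          refine intervalIntegral.integral_congr fun s _ => ?_
          rw [Real.cos_neg, show -s - y = -(s - -y) from by ring, Real.cos_neg]
      _ = A y := h
  obtain ⟨t', ht', hAt⟩ : ∃ t', t' ∈ Set.Icc (0:ℝ) (π/2) ∧ A t = A t' := by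
    set n : ℤ := ⌊t / π⌋ with hn
    have hπ := pi_pos
    have hu0 : 0 ≤ t - n * π := by
      have h := Int.floor_le (t / π)
      have := (le_div_iff₀ hπ).1 h
      linarith
    have hu1 : t - n * π < π := by
      have h := Int.lt_floor_add_one (t / π)
      have := (div_lt_iff₀ hπ).1 h
      push_cast at this ⊢
      linarith
    have hAu : A t = A (t - n * π) := (hperA.sub_int_mul_eq n).symm
    by_cases hc : t - n * π ≤ π / 2
    · exact ⟨t - n * π, ⟨hu0, hc⟩, hAu⟩
    · refine ⟨π - (t - n * π), ⟨by linarith, by linarith⟩, ?_⟩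
      have h1 : A (t - n * π) = A (t - n * π - π) := by
        have h := hperA (t - n * π - π)
        rw [show t - n * π - π + π = t - n * π from by ring] at h
        exact h
      calc A t = A (t - n * π) := hAu
        _ = A (t - n * π - π) := h1
        _ = A (-(π - (t - n * π))) := by rw [show t - n * π - π = -(π - (t - n * π)) from by ring]
        _ = A (π - (t - n * π)) := heven _
  have h0mem : (0:ℝ) ∈ Set.Icc (0:ℝ) (π/2) := ⟨le_refl _, by positivity⟩
  have hhalf : (π/2) ∈ Set.Icc (0:ℝ) (π/2) := ⟨by positivity, le_refl _⟩
  refine ⟨?_, ?_⟩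
  · show A (π/2) ≤ A t
    rw [hAt]
    exact hAanti ht' hhalf ht'.2
  · show A t ≤ A 0
    rw [hAt]
    exact hAanti h0mem ht' ht'.1
end

section
/- For λ ≥ 0, 0 ≤ r ≤ 1 and q ≥ 1, and for every t ∈ ℝ there exists t' ∈ [0, 2π] such that ∫_0^{2π} |cos(s - t)|^λ |r - e^{is}|^{2q-2} ds ≤ ∫_0^{2π} |cos(s - t')|^λ |1 - e^{is}|^{2q-2} ds. -/
open Real intervalIntegral Complex MeasureTheory Metric Set Filter

noncomputable def pk (r u : ℝ) : ℝ :=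
  (1 - r ^ 2) / Complex.normSq (Complex.exp (Complex.I * u) - r)

lemma expI_ne (r : ℝ) (hr0 : 0 ≤ r) (hr : r < 1) (u : ℝ) :
    Complex.exp (Complex.I * u) - (r : ℂ) ≠ 0 := by
  intro h
  have h1 : ‖Complex.exp (Complex.I * u)‖ = 1 := by
    simp [Complex.norm_exp]
  have h2 : Complex.exp (Complex.I * u) = (r : ℂ) := by linear_combination h
  rw [h2] at h1
  simp only [Complex.norm_real, Real.norm_eq_abs, _root_.abs_of_nonneg hr0] at h1
  linarith

lemma pk_nonneg (r u : ℝ) (hr0 : 0 ≤ r) (hr : r < 1) : 0 ≤ pk r u := by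
  apply div_nonneg
  · nlinarith
  · exact Complex.normSq_nonneg _

lemma pk_continuous (r : ℝ) (hr0 : 0 ≤ r) (hr : r < 1) : Continuous (pk r) := by
  apply Continuous.div continuous_const
  · exact Complex.continuous_normSq.comp (by fun_prop)
  · intro u
    simpa [Complex.normSq_eq_zero] using expI_ne r hr0 hr u

lemma pk_identity (r : ℝ) (hr0 : 0 ≤ r) (hr : r < 1) (u : ℝ) :
    (Complex.exp (u * Complex.I) * Complex.I) *
      ((Complex.exp (u * Complex.I) - r)⁻¹ *
          (1 + (r : ℂ) * (Complex.exp (u * Complex.I) - r) / (1 - r * Complex.exp (u * Complex.I)))) =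
    Complex.I * ((pk r u : ℝ) : ℂ) := by
  have hcm : Complex.exp (u * Complex.I) = Complex.exp (Complex.I * u) := by rw [mul_comm]
  set w : ℂ := Complex.exp (Complex.I * u) with hw
  rw [hcm]
  have hw0 : w ≠ 0 := Complex.exp_ne_zero _
  have hwr : w - (r : ℂ) ≠ 0 := expI_ne r hr0 hr u
  have habs : ‖w‖ = 1 := by rw [hw]; simp [Complex.norm_exp]
  have hconj : (starRingEnd ℂ) w * w = 1 := by
    rw [mul_comm, Complex.mul_conj, Complex.normSq_eq_norm_sq, habs]; norm_num
  have hrw : 1 - (r : ℂ) * w ≠ 0 := by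
    intro h
    have : (r : ℂ) * w = 1 := by linear_combination -h
    have := congrArg (‖·‖) this
    simp only [norm_mul, habs, Complex.norm_real, Real.norm_eq_abs, _root_.abs_of_nonneg hr0, norm_one, mul_one] at this
    linarith
  have hcast : ((pk r u : ℝ) : ℂ) = (1 - (r:ℂ)^2) / ((w - r) * ((starRingEnd ℂ) w - r)) := by
    rw [pk]
    push_cast
    congr 1
    rw [← hcm]  -- align exp forms
    rw [hcm]
    rw [← Complex.mul_conj]
    simp [map_sub, Complex.conj_ofReal]
    rfl
  rw [hcast]
  have hconj0 : (starRingEnd ℂ) w - (r:ℂ) ≠ 0 := by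
    intro h
    have : (starRingEnd ℂ) w = (r : ℂ) := by linear_combination h
    have := congrArg (‖·‖) this
    simp only [Complex.norm_conj, habs, Complex.norm_real, Real.norm_eq_abs, _root_.abs_of_nonneg hr0] at this
    linarith
  have hcw : (starRingEnd ℂ) w = w⁻¹ := eq_inv_of_mul_eq_one_left hconj
  rw [hcw]
  have hwinv : w⁻¹ - (r:ℂ) ≠ 0 := hcw ▸ hconj0
  have hrw' : (1:ℂ) - w * r ≠ 0 := by rwa [mul_comm]
  have hwr' : (1:ℂ) - r * w ≠ 0 := hrw
  field_simp
  ring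

lemma one_sub_mul_ne (r : ℝ) (hr0 : 0 ≤ r) (hr : r < 1) (z : ℂ) (hz : ‖z‖ ≤ 1) :
    (1 : ℂ) - (r : ℂ) * z ≠ 0 := by
  intro h
  have h2 : (r : ℂ) * z = 1 := by linear_combination -h
  have := congrArg (‖·‖) h2
  simp only [norm_mul, norm_one, Complex.norm_real, Real.norm_eq_abs, _root_.abs_of_nonneg hr0] at this
  nlinarith [norm_nonneg z]

lemma poisson_repr {h : ℂ → ℂ} (hd : DifferentiableOn ℂ h (Metric.closedBall 0 1))
    (r : ℝ) (hr0 : 0 ≤ r) (hr : r < 1) :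
    (∫ u in (0:ℝ)..(2*π), ((pk r u : ℝ) : ℂ) * h (Complex.exp (Complex.I * u)))
      = 2 * π * h r := by
  have hr_mem : (r : ℂ) ∈ Metric.ball (0:ℂ) 1 := by
    simp only [Metric.mem_ball, Complex.dist_eq, sub_zero, Complex.norm_real, Real.norm_eq_abs,
      _root_.abs_of_nonneg hr0]
    exact hr
  have hcirc : ∀ θ : ℝ, Complex.exp (θ * Complex.I) ∈ Metric.closedBall (0:ℂ) 1 := by
    intro θ
    simp [Metric.mem_closedBall, Complex.dist_eq, Complex.norm_exp]
  have hh_cont : Continuous fun θ : ℝ => h (Complex.exp (θ * Complex.I)) := by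
    exact hd.continuousOn.comp_continuous (by fun_prop) hcirc
  have hwr : ∀ θ : ℝ, Complex.exp (θ * Complex.I) - (r:ℂ) ≠ 0 := by
    intro θ; rw [mul_comm]; exact expI_ne r hr0 hr θ
  have hrw : ∀ θ : ℝ, (1:ℂ) - (r:ℂ) * Complex.exp (θ * Complex.I) ≠ 0 := by
    intro θ
    exact one_sub_mul_ne r hr0 hr _ (by simp [Complex.norm_exp])
  set g : ℂ → ℂ := fun z => h z * ((r:ℂ) * (z - r) / (1 - r * z)) with hgdef
  have hgd : DifferentiableOn ℂ g (Metric.closedBall 0 1) := by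
    apply hd.mul
    apply DifferentiableOn.div
    · fun_prop
    · fun_prop
    · intro z hz
      exact one_sub_mul_ne r hr0 hr z (by simpa [Complex.dist_eq] using hz)
  have c1 := hd.circleIntegral_sub_inv_smul hr_mem
  have c2 := hgd.circleIntegral_sub_inv_smul hr_mem
  simp only [circleIntegral, deriv_circleMap, circleMap_zero, Complex.ofReal_one, one_mul, smul_eq_mul] at c1 c2
  have hg_r : g r = 0 := by simp [hgdef]
  rw [hg_r, mul_zero] at c2
  set A : ℝ → ℂ := fun θ => Complex.exp (θ * Complex.I) * Complex.I *
      ((Complex.exp (θ * Complex.I) - (r:ℂ))⁻¹ * h (Complex.exp (θ * Complex.I))) with hA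
  set B : ℝ → ℂ := fun θ => Complex.exp (θ * Complex.I) * Complex.I *
      ((Complex.exp (θ * Complex.I) - (r:ℂ))⁻¹ * g (Complex.exp (θ * Complex.I))) with hB
  have hAi : IntervalIntegrable A MeasureTheory.volume 0 (2*π) := by
    apply Continuous.intervalIntegrable
    apply Continuous.mul (by fun_prop)
    exact ((Continuous.inv₀ (by fun_prop) hwr).mul hh_cont)
  have hBi : IntervalIntegrable B MeasureTheory.volume 0 (2*π) := by
    apply Continuous.intervalIntegrable
    apply Continuous.mul (by fun_prop)
    apply Continuous.mul (Continuous.inv₀ (by fun_prop) hwr)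
    simp only [hgdef]
    apply hh_cont.mul
    apply Continuous.div (by fun_prop) (by fun_prop) hrw
  have key : ∀ θ : ℝ, A θ + B θ = Complex.I * (((pk r θ : ℝ) : ℂ) * h (Complex.exp (Complex.I * θ))) := by
    intro θ
    have hid := pk_identity r hr0 hr θ
    have expand : A θ + B θ = (Complex.exp (θ * Complex.I) * Complex.I) *
        ((Complex.exp (θ * Complex.I) - (r:ℂ))⁻¹ *
          (1 + (r : ℂ) * (Complex.exp (θ * Complex.I) - r) / (1 - r * Complex.exp (θ * Complex.I)))) *
        h (Complex.exp (θ * Complex.I)) := by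
      simp only [hA, hB, hgdef]
      ring
    rw [expand, hid, mul_comm (θ:ℂ) Complex.I]
    ring
  have hiadd := intervalIntegral.integral_add hAi hBi
  have sum_eq : (∫ θ in (0:ℝ)..(2*π), (A θ + B θ)) =
      Complex.I * ∫ u in (0:ℝ)..(2*π), ((pk r u : ℝ) : ℂ) * h (Complex.exp (Complex.I * u)) := by
    rw [intervalIntegral.integral_congr (g := fun θ => Complex.I *
        (((pk r θ : ℝ) : ℂ) * h (Complex.exp (Complex.I * θ)))) (fun θ _ => key θ)]
    exact intervalIntegral.integral_const_mul _ _
  rw [hiadd, c1, c2, add_zero] at sum_eq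
  have : Complex.I * (2 * ↑π * h ↑r) =
      Complex.I * ∫ u in (0:ℝ)..(2*π), ((pk r u : ℝ) : ℂ) * h (Complex.exp (Complex.I * u)) := by
    rw [← sum_eq]; ring
  have := mul_left_cancel₀ Complex.I_ne_zero this
  rw [← this]

lemma pk_integral (r : ℝ) (hr0 : 0 ≤ r) (hr : r < 1) :
    (∫ u in (0:ℝ)..(2*π), pk r u) = 2 * π := by
  have h1 := poisson_repr (h := fun _ => (1:ℂ)) (differentiableOn_const 1) r hr0 hr
  simp only [mul_one] at h1
  rw [intervalIntegral.integral_ofReal] at h1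
  exact_mod_cast h1

lemma poisson_norm {h : ℂ → ℂ} (hd : DifferentiableOn ℂ h (Metric.closedBall 0 1))
    (r : ℝ) (hr0 : 0 ≤ r) (hr : r < 1) :
    2 * π * ‖h r‖ ≤
      ∫ u in (0:ℝ)..(2*π), pk r u * ‖h (Complex.exp (Complex.I * u))‖ := by
  have h1 := poisson_repr hd r hr0 hr
  have h2 : ‖2 * π * h r‖ = 2 * π * ‖h r‖ := by
    rw [norm_mul]
    congr 1
    simp [Complex.norm_real, Real.norm_eq_abs, abs_of_pos Real.pi_pos]
  calc 2 * π * ‖h r‖ = ‖2 * π * h r‖ := h2.symm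
    _ = ‖∫ u in (0:ℝ)..(2*π), ((pk r u : ℝ) : ℂ) * h (Complex.exp (Complex.I * u))‖ := by
        rw [h1]
    _ ≤ |∫ u in (0:ℝ)..(2*π), ‖((pk r u : ℝ) : ℂ) * h (Complex.exp (Complex.I * u))‖| :=
        intervalIntegral.norm_integral_le_abs_integral_norm
    _ = |∫ u in (0:ℝ)..(2*π), pk r u * ‖h (Complex.exp (Complex.I * u))‖| := by
        congr 1
        apply intervalIntegral.integral_congr
        intro u _
        simp only [norm_mul, Complex.norm_real, Real.norm_eq_abs]
        rw [_root_.abs_of_nonneg (pk_nonneg r u hr0 hr)]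
    _ = ∫ u in (0:ℝ)..(2*π), pk r u * ‖h (Complex.exp (Complex.I * u))‖ := by
        apply _root_.abs_of_nonneg
        apply intervalIntegral.integral_nonneg (by positivity)
        intro u _
        exact mul_nonneg (pk_nonneg r u hr0 hr) (norm_nonneg _)

lemma cont_rpow_comp {X : Type*} [TopologicalSpace X] {f : X → ℝ} (hf : Continuous f)
    {p : ℝ} (hp : 0 ≤ p) : Continuous fun x => f x ^ p :=
  continuous_iff_continuousAt.mpr fun x =>
    (Real.continuousAt_rpow_const (f x) p (Or.inr hp)).comp hf.continuousAt

lemma poisson_ineq (p r s : ℝ) (hp : 0 ≤ p) (hr0 : 0 ≤ r) (hr : r < 1) :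
    ‖(r:ℂ) - Complex.exp (Complex.I * s)‖ ^ p ≤
      (2*π)⁻¹ * ∫ u in (0:ℝ)..(2*π), pk r u *
        ‖Complex.exp (Complex.I*u) - Complex.exp (Complex.I*s)‖ ^ p := by
  set Φ : ℝ → ℝ := fun ρ =>
    (∫ u in (0:ℝ)..(2*π), pk r u *
        ‖Complex.exp (Complex.I*s) - (ρ:ℂ) * Complex.exp (Complex.I*u)‖ ^ p)
      - 2*π * ‖Complex.exp (Complex.I*s) - (ρ:ℂ) * r‖ ^ p with hΦ
  have claim1 : ∀ ρ ∈ Set.Ico (0:ℝ) 1, 0 ≤ Φ ρ := by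
    intro ρ hρ
    obtain ⟨hρ0, hρ1⟩ := hρ
    set h : ℂ → ℂ := fun z =>
      Complex.exp (p * Complex.log (1 - Complex.exp (-(Complex.I*s)) * ((ρ:ℂ) * z))) with hh
    have hslit : ∀ z : ℂ, ‖z‖ ≤ 1 →
        (1 - Complex.exp (-(Complex.I*s)) * ((ρ:ℂ) * z)) ∈ Complex.slitPlane := by
      intro z hz
      apply Complex.mem_slitPlane_iff.mpr
      left
      have habs : ‖Complex.exp (-(Complex.I*s)) * ((ρ:ℂ) * z)‖ ≤ ρ := by
        rw [norm_mul, norm_mul]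
        have h1 : ‖Complex.exp (-(Complex.I*(s:ℂ)))‖ = 1 := by
          simp [Complex.norm_exp]
        rw [h1, one_mul, Complex.norm_real, Real.norm_eq_abs, _root_.abs_of_nonneg hρ0]
        nlinarith [norm_nonneg z]
      have hre := Complex.abs_re_le_norm (Complex.exp (-(Complex.I*s)) * ((ρ:ℂ) * z))
      have : ((1:ℂ) - Complex.exp (-(Complex.I*s)) * ((ρ:ℂ) * z)).re =
          1 - (Complex.exp (-(Complex.I*s)) * ((ρ:ℂ) * z)).re := by simp
      rw [this]
      have := abs_le.mp (le_trans hre habs) |>.2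
      linarith
    have hζne : ∀ z : ℂ, ‖z‖ ≤ 1 →
        (1 - Complex.exp (-(Complex.I*s)) * ((ρ:ℂ) * z)) ≠ 0 :=
      fun z hz => Complex.slitPlane_ne_zero (hslit z hz)
    have hd : DifferentiableOn ℂ h (Metric.closedBall 0 1) := by
      apply DifferentiableOn.cexp
      apply DifferentiableOn.const_mul
      apply DifferentiableOn.clog
      · fun_prop
      · intro z hz
        exact hslit z (by simpa [Complex.dist_eq] using hz)
    have habs_h : ∀ z : ℂ, ‖z‖ ≤ 1 →
        ‖h z‖ = ‖Complex.exp (Complex.I*s) - (ρ:ℂ) * z‖ ^ p := by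
      intro z hz
      have hζ := hζne z hz
      have hXpos : 0 < ‖1 - Complex.exp (-(Complex.I*s)) * ((ρ:ℂ) * z)‖ :=
        norm_pos_iff.mpr hζ
      have hXeq : ‖1 - Complex.exp (-(Complex.I*s)) * ((ρ:ℂ) * z)‖ =
          ‖Complex.exp (Complex.I*s) - (ρ:ℂ) * z‖ := by
        have hmul : Complex.exp (Complex.I*s) *
            (1 - Complex.exp (-(Complex.I*s)) * ((ρ:ℂ) * z)) =
            Complex.exp (Complex.I*s) - (ρ:ℂ) * z := by
          have : Complex.exp (Complex.I*s) * Complex.exp (-(Complex.I*s)) = 1 := by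
            rw [← Complex.exp_add]; simp
          calc Complex.exp (Complex.I*s) *
              (1 - Complex.exp (-(Complex.I*s)) * ((ρ:ℂ) * z))
              = Complex.exp (Complex.I*s) - (Complex.exp (Complex.I*s) *
                  Complex.exp (-(Complex.I*s))) * ((ρ:ℂ) * z) := by ring
            _ = Complex.exp (Complex.I*s) - (ρ:ℂ) * z := by rw [this, one_mul]
        have := congrArg (‖·‖) hmul
        rwa [norm_mul, Complex.norm_exp, Complex.mul_re, Complex.I_re, Complex.I_im,
          Complex.ofReal_re, Complex.ofReal_im, zero_mul, one_mul, zero_sub, neg_zero,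
          Real.exp_zero, one_mul] at this
      rw [hh]
      simp only
      rw [Complex.norm_exp, Complex.re_ofReal_mul, Complex.log_re, ← hXeq,
        Real.rpow_def_of_pos hXpos, mul_comm]
    have hpn := poisson_norm hd r hr0 hr
    have e1 : ‖h ↑r‖ = ‖Complex.exp (Complex.I*s) - (ρ:ℂ) * r‖ ^ p :=
      habs_h (r:ℂ) (by simp [Complex.norm_real, Real.norm_eq_abs, _root_.abs_of_nonneg hr0, hr.le])
    have e2 : (∫ u in (0:ℝ)..(2*π), pk r u * ‖h (Complex.exp (Complex.I * u))‖) =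
        ∫ u in (0:ℝ)..(2*π), pk r u *
          ‖Complex.exp (Complex.I*s) - (ρ:ℂ) * Complex.exp (Complex.I*u)‖ ^ p := by
      apply intervalIntegral.integral_congr
      intro u _
      exact congrArg (fun X => pk r u * X) (habs_h _ (by simp [Complex.norm_exp]))
    rw [e1, e2] at hpn
    rw [hΦ]
    simp only
    linarith
  have claim2 : Continuous Φ := by
    rw [hΦ]
    apply Continuous.sub
    · apply intervalIntegral.continuous_parametric_intervalIntegral_of_continuous'
        (f := fun (ρ : ℝ) (u : ℝ) => pk r u *
          ‖Complex.exp (Complex.I*s) - (ρ:ℂ) * Complex.exp (Complex.I*u)‖ ^ p)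
      apply Continuous.mul
      · exact (pk_continuous r hr0 hr).comp continuous_snd
      · exact cont_rpow_comp (continuous_norm.comp (by fun_prop)) hp
    · apply Continuous.mul continuous_const
      exact cont_rpow_comp (continuous_norm.comp (by fun_prop)) hp
  have hΦ1 : 0 ≤ Φ 1 := by
    have htd : Filter.Tendsto Φ (nhdsWithin (1:ℝ) (Set.Iio 1)) (nhds (Φ 1)) :=
      (claim2.tendsto 1).mono_left nhdsWithin_le_nhds
    apply ge_of_tendsto htd
    filter_upwards [Ioo_mem_nhdsLT_of_mem (Set.mem_Ioc.mpr ⟨zero_lt_one, le_refl (1:ℝ)⟩)]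
      with ρ hρ
    exact claim1 ρ ⟨hρ.1.le, hρ.2⟩
  rw [hΦ] at hΦ1
  simp only [Complex.ofReal_one, one_mul] at hΦ1
  have habsw : ‖(r:ℂ) - Complex.exp (Complex.I * s)‖ =
      ‖Complex.exp (Complex.I*s) - (r:ℂ)‖ := norm_sub_rev _ _
  have hintc : ∀ u : ℝ, ‖Complex.exp (Complex.I*s) - Complex.exp (Complex.I*u)‖ ^ p =
      ‖Complex.exp (Complex.I*u) - Complex.exp (Complex.I*s)‖ ^ p := by
    intro u; rw [norm_sub_rev]
  have hle : 2*π * ‖(r:ℂ) - Complex.exp (Complex.I * s)‖ ^ p ≤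
      ∫ u in (0:ℝ)..(2*π), pk r u *
        ‖Complex.exp (Complex.I*u) - Complex.exp (Complex.I*s)‖ ^ p := by
    rw [habsw]
    calc 2*π * ‖Complex.exp (Complex.I*s) - (r:ℂ)‖ ^ p
        ≤ ∫ u in (0:ℝ)..(2*π), pk r u *
          ‖Complex.exp (Complex.I*s) - Complex.exp (Complex.I*u)‖ ^ p := by linarith
      _ = _ := by
          apply intervalIntegral.integral_congr
          intro u _
          exact congrArg (fun X => pk r u * X) (hintc u)
  have h2π : (0:ℝ) < 2*π := by positivity
  calc ‖(r:ℂ) - Complex.exp (Complex.I * s)‖ ^ p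
      = (2*π)⁻¹ * (2*π * ‖(r:ℂ) - Complex.exp (Complex.I * s)‖ ^ p) := by
        field_simp
    _ ≤ (2*π)⁻¹ * ∫ u in (0:ℝ)..(2*π), pk r u *
          ‖Complex.exp (Complex.I*u) - Complex.exp (Complex.I*s)‖ ^ p := by
        apply mul_le_mul_of_nonneg_left hle (by positivity)

lemma interval_fubini {K : ℝ → ℝ → ℝ} (hK : Continuous (Function.uncurry K)) (a b : ℝ)
    (hab : a ≤ b) :
    (∫ s in a..b, ∫ u in a..b, K s u) = ∫ u in a..b, ∫ s in a..b, K s u := by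
  rw [intervalIntegral.integral_of_le hab, intervalIntegral.integral_of_le hab]
  simp_rw [intervalIntegral.integral_of_le hab]
  have hint : MeasureTheory.Integrable (Function.uncurry K)
      ((MeasureTheory.volume.restrict (Set.Ioc a b)).prod
        (MeasureTheory.volume.restrict (Set.Ioc a b))) := by
    rw [MeasureTheory.Measure.prod_restrict]
    exact (hK.continuousOn.integrableOn_compact (isCompact_Icc.prod isCompact_Icc)).mono_set
      (Set.prod_mono Set.Ioc_subset_Icc_self Set.Ioc_subset_Icc_self)
  exact MeasureTheory.integral_integral_swap hint

theorem colonna_extremal_on_boundary (lam q r : ℝ) (hlam : 0 ≤ lam) (hq : 1 ≤ q)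
    (hr0 : 0 ≤ r) (hr1 : r ≤ 1) (t : ℝ) :
    ∃ t' ∈ Set.Icc (0 : ℝ) (2 * π),
      (∫ s in (0:ℝ)..(2 * π), |Real.cos (s - t)| ^ lam *
          ‖(r : ℂ) - Complex.exp (Complex.I * s)‖ ^ (2 * q - 2)) ≤
      (∫ s in (0:ℝ)..(2 * π), |Real.cos (s - t')| ^ lam *
          ‖(1 : ℂ) - Complex.exp (Complex.I * s)‖ ^ (2 * q - 2)) := by
  have h2π : (0:ℝ) < 2 * π := by positivity
  set p : ℝ := 2 * q - 2 with hpdef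
  have hp : 0 ≤ p := by rw [hpdef]; linarith
  by_cases hre : r = 1
  · subst hre
    refine ⟨t - ⌊t / (2*π)⌋ * (2*π), ⟨Int.sub_floor_div_mul_nonneg t h2π,
      (Int.sub_floor_div_mul_lt t h2π).le⟩, le_of_eq ?_⟩
    apply intervalIntegral.integral_congr
    intro s _
    have harg : s - (t - ⌊t / (2*π)⌋ * (2*π)) = s - t + ⌊t / (2*π)⌋ * (2*π) := by ring
    simp only [Complex.ofReal_one]
    rw [harg, Real.cos_add_int_mul_two_pi]
  · have hr : r < 1 := lt_of_le_of_ne hr1 hre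
    set f : ℝ → ℝ := fun s => |Real.cos (s - t)| ^ lam with hf
    have hfc : Continuous f := cont_rpow_comp (by fun_prop) hlam
    have hfnn : ∀ s, 0 ≤ f s := fun s => Real.rpow_nonneg (abs_nonneg _) lam
    set C : ℝ → ℝ := fun τ => ∫ v in (0:ℝ)..(2*π),
      |Real.cos (v - τ)| ^ lam * ‖1 - Complex.exp (Complex.I * v)‖ ^ p with hC
    have hCcont : Continuous C := by
      apply intervalIntegral.continuous_parametric_intervalIntegral_of_continuous'
        (f := fun (τ : ℝ) (v : ℝ) => |Real.cos (v - τ)| ^ lam *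
          ‖1 - Complex.exp (Complex.I * v)‖ ^ p)
      apply Continuous.mul
      · exact cont_rpow_comp (by fun_prop) hlam
      · exact cont_rpow_comp (continuous_norm.comp (by fun_prop)) hp
    obtain ⟨t', ht'mem, ht'max⟩ := isCompact_Icc.exists_isMaxOn
      (Set.nonempty_Icc.mpr h2π.le) hCcont.continuousOn
    have hCper : Function.Periodic C (2*π) := by
      intro τ
      apply intervalIntegral.integral_congr
      intro v _
      simp only
      have harg : v - (τ + 2*π) = v - τ - 2*π := by ring
      rw [harg, Real.cos_sub_two_pi]
    have hCle : ∀ x : ℝ, C x ≤ C t' := by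
      intro x
      have h1 : C (x - ⌊x / (2*π)⌋ * (2*π)) = C x := hCper.sub_int_mul_eq ⌊x / (2*π)⌋
      have hmem : x - ⌊x / (2*π)⌋ * (2*π) ∈ Set.Icc 0 (2*π) :=
        ⟨Int.sub_floor_div_mul_nonneg x h2π, (Int.sub_floor_div_mul_lt x h2π).le⟩
      calc C x = C (x - ⌊x / (2*π)⌋ * (2*π)) := h1.symm
        _ ≤ C t' := ht'max hmem
    refine ⟨t', ht'mem, ?_⟩
    set A : ℝ → ℝ → ℝ := fun s u =>
      ‖Complex.exp (Complex.I*u) - Complex.exp (Complex.I*s)‖ ^ p with hA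
    have hAc : Continuous fun x : ℝ × ℝ => A x.1 x.2 :=
      cont_rpow_comp (continuous_norm.comp (by fun_prop)) hp
    set B : ℝ → ℝ := fun u => ∫ s in (0:ℝ)..(2*π), f s * A s u with hB
    set D : ℝ → ℝ := fun s => ∫ u in (0:ℝ)..(2*π), pk r u * A s u with hD
    have hDc : Continuous D := by
      apply intervalIntegral.continuous_parametric_intervalIntegral_of_continuous'
        (f := fun (s : ℝ) (u : ℝ) => pk r u * A s u)
      exact (((pk_continuous r hr0 hr).comp continuous_snd).mul hAc :)
    have hBC : ∀ u : ℝ, B u = C (t - u) := by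
      intro u
      set g : ℝ → ℝ := fun v => |Real.cos (v - (t - u))| ^ lam *
        ‖1 - Complex.exp (Complex.I * v)‖ ^ p with hg
      have hgper : Function.Periodic g (2*π) := by
        intro v
        simp only [hg]
        have h1 : v + 2*π - (t - u) = v - (t - u) + 2*π := by ring
        have h2 : Complex.exp (Complex.I * (↑(v + 2*π))) = Complex.exp (Complex.I * v) := by
          push_cast
          rw [mul_add, Complex.exp_add]
          have hI : Complex.I * (2 * (π:ℂ)) = 2 * (π:ℂ) * Complex.I := by ring
          rw [hI, Complex.exp_two_pi_mul_I, mul_one]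
        rw [h1, Real.cos_add_two_pi, h2]
      have hpt : ∀ s : ℝ, f s * A s u = g (s - u) := by
        intro s
        simp only [hf, hg, hA]
        have h1 : s - u - (t - u) = s - t := by ring
        have h2 : ‖Complex.exp (Complex.I*u) - Complex.exp (Complex.I*s)‖ =
            ‖1 - Complex.exp (Complex.I * (↑(s - u)))‖ := by
          have hmul : Complex.exp (Complex.I*u) - Complex.exp (Complex.I*s) =
              Complex.exp (Complex.I*u) * (1 - Complex.exp (Complex.I * (↑(s - u)))) := by
            rw [mul_sub, mul_one, ← Complex.exp_add]
            push_cast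
            ring_nf
          rw [hmul, norm_mul, Complex.norm_exp]
          simp
        rw [h1, h2]
      have e1 : B u = ∫ s in (0:ℝ)..(2*π), g (s - u) :=
        intervalIntegral.integral_congr (fun s _ => hpt s)
      rw [e1, intervalIntegral.integral_comp_sub_right g u]
      have e3 : (2*π:ℝ) - u = 0 - u + 2*π := by ring
      rw [e3, hgper.intervalIntegral_add_eq (0 - u) 0, zero_add]
    have step1 : (∫ s in (0:ℝ)..(2*π), f s *
          ‖(r : ℂ) - Complex.exp (Complex.I * s)‖ ^ p) ≤
        ∫ s in (0:ℝ)..(2*π), f s * ((2*π)⁻¹ * D s) := by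
      apply intervalIntegral.integral_mono_on h2π.le
      · exact (hfc.mul (cont_rpow_comp (continuous_norm.comp (by fun_prop)) hp)).intervalIntegrable _ _
      · exact (hfc.mul (continuous_const.mul hDc)).intervalIntegrable _ _
      · intro s _
        exact mul_le_mul_of_nonneg_left (poisson_ineq p r s hp hr0 hr) (hfnn s)
    have inner_eq : ∀ s : ℝ, f s * ((2*π)⁻¹ * D s) =
        (2*π)⁻¹ * ∫ u in (0:ℝ)..(2*π), f s * (pk r u * A s u) := by
      intro s
      rw [intervalIntegral.integral_const_mul (f s) (fun u => pk r u * A s u)]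
      have : D s = ∫ u in (0:ℝ)..(2*π), pk r u * A s u := rfl
      rw [this]
      ring
    have hKc : Continuous (Function.uncurry fun s u => f s * (pk r u * A s u)) :=
      (((hfc.comp continuous_fst).mul
        (((pk_continuous r hr0 hr).comp continuous_snd).mul hAc)) :)
    have step2 : (∫ s in (0:ℝ)..(2*π), f s * ((2*π)⁻¹ * D s)) =
        (2*π)⁻¹ * ∫ u in (0:ℝ)..(2*π), pk r u * B u := by
      calc (∫ s in (0:ℝ)..(2*π), f s * ((2*π)⁻¹ * D s))
          = ∫ s in (0:ℝ)..(2*π), (2*π)⁻¹ * ∫ u in (0:ℝ)..(2*π), f s * (pk r u * A s u) :=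
            intervalIntegral.integral_congr (fun s _ => inner_eq s)
        _ = (2*π)⁻¹ * ∫ s in (0:ℝ)..(2*π), ∫ u in (0:ℝ)..(2*π), f s * (pk r u * A s u) :=
            intervalIntegral.integral_const_mul _ _
        _ = (2*π)⁻¹ * ∫ u in (0:ℝ)..(2*π), ∫ s in (0:ℝ)..(2*π), f s * (pk r u * A s u) := by
            rw [interval_fubini hKc 0 (2*π) h2π.le]
        _ = (2*π)⁻¹ * ∫ u in (0:ℝ)..(2*π), pk r u * B u := by
            congr 1
            apply intervalIntegral.integral_congr
            intro u _
            calc (∫ s in (0:ℝ)..(2*π), f s * (pk r u * A s u))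
                = ∫ s in (0:ℝ)..(2*π), pk r u * (f s * A s u) :=
                  intervalIntegral.integral_congr
                    (fun s _ => mul_left_comm (f s) (pk r u) (A s u))
              _ = pk r u * B u := intervalIntegral.integral_const_mul _ _
    have step3 : (2*π)⁻¹ * (∫ u in (0:ℝ)..(2*π), pk r u * B u) ≤ C t' := by
      have hint1 : (∫ u in (0:ℝ)..(2*π), pk r u * B u) =
          ∫ u in (0:ℝ)..(2*π), pk r u * C (t - u) :=
        intervalIntegral.integral_congr (fun u _ => by rw [hBC u])
      have hmono : (∫ u in (0:ℝ)..(2*π), pk r u * C (t - u)) ≤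
          ∫ u in (0:ℝ)..(2*π), pk r u * C t' := by
        apply intervalIntegral.integral_mono_on h2π.le
        · exact ((pk_continuous r hr0 hr).mul (hCcont.comp (by fun_prop))).intervalIntegrable _ _
        · exact ((pk_continuous r hr0 hr).mul continuous_const).intervalIntegrable _ _
        · intro u _
          exact mul_le_mul_of_nonneg_left (hCle (t - u)) (pk_nonneg r u hr0 hr)
      have hval : (∫ u in (0:ℝ)..(2*π), pk r u * C t') = 2*π * C t' := by
        rw [intervalIntegral.integral_mul_const, pk_integral r hr0 hr]
      have hπ : (2*π:ℝ)⁻¹ * (2*π * C t') = C t' := by field_simp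
      calc (2*π)⁻¹ * (∫ u in (0:ℝ)..(2*π), pk r u * B u)
          = (2*π)⁻¹ * ∫ u in (0:ℝ)..(2*π), pk r u * C (t - u) := by rw [hint1]
        _ ≤ (2*π)⁻¹ * ∫ u in (0:ℝ)..(2*π), pk r u * C t' := by
            apply mul_le_mul_of_nonneg_left hmono (by positivity)
        _ = C t' := by rw [hval, hπ]
    have final : C t' = ∫ s in (0:ℝ)..(2 * π), |Real.cos (s - t')| ^ lam *
        ‖(1:ℂ) - Complex.exp (Complex.I * s)‖ ^ p := rfl
    calc (∫ s in (0:ℝ)..(2 * π), f s *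
          ‖(r : ℂ) - Complex.exp (Complex.I * s)‖ ^ p)
        ≤ ∫ s in (0:ℝ)..(2*π), f s * ((2*π)⁻¹ * D s) := step1
      _ = (2*π)⁻¹ * ∫ u in (0:ℝ)..(2*π), pk r u * B u := step2
      _ ≤ C t' := step3
      _ = _ := final
end

section
/- For 0 ≤ r < 1, the Möbius substitution e^{iθ} = (r - e^{is})/(1 - r e^{is}) satisfies dθ/ds = (1 - r²)/(1 + r² - 2r cos s); consequently, for any continuous function g on the unit circle, ∫_0^{2π} g((r - e^{is})/(1 - r e^{is})) (1 - r²)/(1 + r² - 2r cos s) ds = ∫_0^{2π} g(e^{iθ}) dθ. -/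
open Real MeasureTheory intervalIntegral

private lemma aux_D_pos (r : ℝ) (hr0 : 0 ≤ r) (hr1 : r < 1) (s : ℝ) :
    0 < 1 + r ^ 2 - 2 * r * Real.cos s := by
  nlinarith [Real.cos_le_one s, Real.neg_one_le_cos s, sq_nonneg (1 - r)]

private lemma aux_cos (s : ℝ) :
    Complex.cos (s : ℂ) =
      (Complex.exp (Complex.I * s) + (Complex.exp (Complex.I * s))⁻¹) / 2 := by
  rw [Complex.cos, ← Complex.exp_neg, mul_comm]
  ring_nf

private lemma aux_den_ne (r : ℝ) (hr0 : 0 ≤ r) (hr1 : r < 1) (s : ℝ) :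
    (1 : ℂ) - (r : ℂ) * Complex.exp (Complex.I * s) ≠ 0 := by
  intro h
  have h1 : (r : ℂ) * Complex.exp (Complex.I * s) = 1 := by linear_combination -h
  have h2 : ‖(r : ℂ) * Complex.exp (Complex.I * s)‖ = 1 := by rw [h1]; simp
  rw [norm_mul, Complex.norm_real, Real.norm_of_nonneg hr0, mul_comm Complex.I,
    Complex.norm_exp_ofReal_mul_I, mul_one] at h2
  linarith

private lemma aux_exp_deriv (s : ℝ) :
    HasDerivAt (fun t : ℝ => Complex.exp (Complex.I * t))
      (Complex.I * Complex.exp (Complex.I * s)) s := by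
  have h : HasDerivAt (fun z : ℂ => Complex.exp (Complex.I * z))
      (Complex.exp (Complex.I * s) * Complex.I) (s : ℂ) := by
    exact (Complex.hasDerivAt_exp (Complex.I * s)).comp (s : ℂ)
      (by simpa using (hasDerivAt_id (s : ℂ)).const_mul Complex.I)
  simpa [mul_comm] using h.comp_ofReal

private lemma aux_hasDeriv (r : ℝ) (hr0 : 0 ≤ r) (hr1 : r < 1) (s : ℝ) :
    HasDerivAt
      (fun s : ℝ => ((r : ℂ) - Complex.exp (Complex.I * s)) / (1 - r * Complex.exp (Complex.I * s)))
      (Complex.I * (((1 - r ^ 2) / (1 + r ^ 2 - 2 * r * Real.cos s) : ℝ) : ℂ) *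
        (((r : ℂ) - Complex.exp (Complex.I * s)) / (1 - r * Complex.exp (Complex.I * s)))) s := by
  have hden := aux_den_ne r hr0 hr1 s
  have hnum : HasDerivAt (fun t : ℝ => (r : ℂ) - Complex.exp (Complex.I * t))
      (-(Complex.I * Complex.exp (Complex.I * s))) s := (aux_exp_deriv s).const_sub _
  have hden' : HasDerivAt (fun t : ℝ => (1 : ℂ) - (r : ℂ) * Complex.exp (Complex.I * t))
      (-((r : ℂ) * (Complex.I * Complex.exp (Complex.I * s)))) s :=
    (((aux_exp_deriv s).const_mul (r : ℂ)).const_sub _)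
  have h := hnum.div hden' hden
  refine h.congr_deriv (Eq.symm ?_)
  have hD := aux_D_pos r hr0 hr1 s
  have hDne : ((1 + r ^ 2 - 2 * r * Real.cos s : ℝ) : ℂ) ≠ 0 := by
    exact_mod_cast ne_of_gt hD
  have hE : Complex.exp (Complex.I * s) ≠ 0 := Complex.exp_ne_zero _
  set E := Complex.exp (Complex.I * s) with hEdef
  have hcos2 : Complex.cos (s : ℂ) = (E ^ 2 + 1) / (2 * E) := by
    rw [aux_cos]; field_simp; ring
  have key : (((1 + r ^ 2 - 2 * r * Real.cos s : ℝ)) : ℂ) * E =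
      -(((r : ℂ) - E) * (1 - r * E)) := by
    push_cast
    rw [hcos2]
    field_simp
    ring
  have hDne2 : (1 : ℂ) + (r : ℂ) ^ 2 - 2 * r * Complex.cos (s : ℂ) ≠ 0 := by
    exact_mod_cast hDne
  have key' : 2 * Complex.cos (s : ℂ) * E = E ^ 2 + 1 := by
    rw [hcos2]; field_simp
  push_cast
  field_simp [hDne2]
  rw [div_eq_iff (by convert hDne2 using 2; ring)]
  linear_combination (-(1 - (r : ℂ) ^ 2) * r) * key'

private lemma aux_exp_form (s : ℝ) :
    Complex.exp (Complex.I * s) = (Real.cos s : ℂ) + (Real.sin s : ℂ) * Complex.I := by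
  rw [mul_comm, Complex.exp_mul_I, Complex.ofReal_cos, Complex.ofReal_sin]

noncomputable def mobTheta (r s : ℝ) : ℝ :=
  π + s - 2 * (Complex.log (1 - (r : ℂ) * Complex.exp (Complex.I * s))).im

private lemma aux_w_deriv (r : ℝ) (s : ℝ) :
    HasDerivAt (fun t : ℝ => (1 : ℂ) - (r : ℂ) * Complex.exp (Complex.I * t))
      (-((r : ℂ) * (Complex.I * Complex.exp (Complex.I * s)))) s :=
  ((aux_exp_deriv s).const_mul (r : ℂ)).const_sub _

private lemma aux_w_slit (r : ℝ) (hr0 : 0 ≤ r) (hr1 : r < 1) (s : ℝ) :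
    (1 : ℂ) - (r : ℂ) * Complex.exp (Complex.I * s) ∈ Complex.slitPlane := by
  rw [Complex.mem_slitPlane_iff]
  left
  rw [aux_exp_form]
  simp only [Complex.sub_re, Complex.one_re, Complex.mul_re, Complex.ofReal_re,
    Complex.ofReal_im, Complex.add_re, Complex.add_im, Complex.mul_im, Complex.I_re,
    Complex.I_im, mul_one, mul_zero, zero_mul]
  nlinarith [Real.cos_le_one s, Real.neg_one_le_cos s]

private lemma aux_normSq (r s : ℝ) :
    Complex.normSq ((1 : ℂ) - (r : ℂ) * Complex.exp (Complex.I * s)) =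
      1 + r ^ 2 - 2 * r * Real.cos s := by
  rw [aux_exp_form]
  simp only [Complex.normSq_apply, Complex.sub_re, Complex.sub_im, Complex.one_re,
    Complex.one_im, Complex.mul_re, Complex.mul_im, Complex.ofReal_re, Complex.ofReal_im,
    Complex.add_re, Complex.add_im, Complex.I_re, Complex.I_im]
  ring_nf
  nlinarith [Real.sin_sq_add_cos_sq s]

private lemma aux_theta_deriv (r : ℝ) (hr0 : 0 ≤ r) (hr1 : r < 1) (s : ℝ) :
    HasDerivAt (mobTheta r) ((1 - r ^ 2) / (1 + r ^ 2 - 2 * r * Real.cos s)) s := by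
  have hw := aux_w_deriv r s
  have hlog := (Complex.hasDerivAt_log (aux_w_slit r hr0 hr1 s)).comp s hw
  have him : HasDerivAt
      (fun t : ℝ => (Complex.log ((1 : ℂ) - (r : ℂ) * Complex.exp (Complex.I * t))).im)
      ((((1 : ℂ) - (r : ℂ) * Complex.exp (Complex.I * s))⁻¹ *
        -((r : ℂ) * (Complex.I * Complex.exp (Complex.I * s)))).im) s :=
    Complex.imCLM.hasFDerivAt.comp_hasDerivAt s hlog
  have h := ((hasDerivAt_id s).const_add π).sub (him.const_mul 2)
  refine h.congr_deriv (Eq.symm ?_)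
  have hD := aux_D_pos r hr0 hr1 s
  have hD' : 1 + r ^ 2 - r * 2 * Real.cos s ≠ 0 := ne_of_gt (by linarith)
  have him2 : ((((1 : ℂ) - (r : ℂ) * Complex.exp (Complex.I * s))⁻¹ *
      -((r : ℂ) * (Complex.I * Complex.exp (Complex.I * s)))).im) =
      (r ^ 2 - r * Real.cos s) / (1 + r ^ 2 - 2 * r * Real.cos s) := by
    rw [inv_mul_eq_div, Complex.div_im, aux_normSq, aux_exp_form]
    simp only [Complex.sub_re, Complex.sub_im, Complex.one_re, Complex.one_im, Complex.neg_re,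
      Complex.neg_im, Complex.mul_re, Complex.mul_im, Complex.ofReal_re, Complex.ofReal_im,
      Complex.add_re, Complex.add_im, Complex.I_re, Complex.I_im]
    have hsc : Real.sin s ^ 2 = 1 - Real.cos s ^ 2 := by nlinarith [Real.sin_sq_add_cos_sq s]
    rw [div_sub_div_same]
    congr 1
    linear_combination r ^ 2 * hsc
  rw [him2]
  field_simp [hD']
  ring

private lemma aux_exp_theta (r : ℝ) (hr0 : 0 ≤ r) (hr1 : r < 1) (s : ℝ) :
    Complex.exp (Complex.I * ((mobTheta r s : ℝ) : ℂ)) =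
      ((r : ℂ) - Complex.exp (Complex.I * s)) / (1 - r * Complex.exp (Complex.I * s)) := by
  have hE : Complex.exp (Complex.I * s) ≠ 0 := Complex.exp_ne_zero _
  set E := Complex.exp (Complex.I * s) with hEdef
  have hw0 : (1 : ℂ) - (r : ℂ) * E ≠ 0 := aux_den_ne r hr0 hr1 s
  have habs : 0 < ‖(1 : ℂ) - (r : ℂ) * E‖ := by rwa [norm_pos_iff]
  have h0 : (((Complex.log ((1 : ℂ) - (r : ℂ) * E)).im : ℝ) : ℂ) * Complex.I =
      Complex.log ((1 : ℂ) - (r : ℂ) * E) -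
        (((Complex.log ((1 : ℂ) - (r : ℂ) * E)).re : ℝ) : ℂ) := by
    linear_combination Complex.re_add_im (Complex.log ((1 : ℂ) - (r : ℂ) * E))
  have h1 : Complex.I * ((mobTheta r s : ℝ) : ℂ) =
      (π : ℂ) * Complex.I + (s : ℂ) * Complex.I -
        (Complex.log ((1 : ℂ) - (r : ℂ) * E) -
          (((Complex.log ((1 : ℂ) - (r : ℂ) * E)).re : ℝ) : ℂ)) -
        (Complex.log ((1 : ℂ) - (r : ℂ) * E) -
          (((Complex.log ((1 : ℂ) - (r : ℂ) * E)).re : ℝ) : ℂ)) := by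
    show Complex.I * ((π + s - 2 * (Complex.log ((1 : ℂ) - (r : ℂ) * E)).im : ℝ) : ℂ) = _
    push_cast
    linear_combination (-2 : ℂ) * h0
  have e1 : Complex.exp (Complex.log ((1 : ℂ) - (r : ℂ) * E) -
      (((Complex.log ((1 : ℂ) - (r : ℂ) * E)).re : ℝ) : ℂ)) =
      ((1 : ℂ) - (r : ℂ) * E) / (‖(1 : ℂ) - (r : ℂ) * E‖ : ℂ) := by
    rw [Complex.exp_sub, Complex.exp_log hw0, Complex.log_re, ← Complex.ofReal_exp,
      Real.exp_log habs]
  rw [h1, Complex.exp_sub, Complex.exp_sub, Complex.exp_add, Complex.exp_pi_mul_I, e1]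
  have hsE : Complex.exp ((s : ℂ) * Complex.I) = E := by rw [hEdef, mul_comm]
  rw [hsE]
  have hconj : (starRingEnd ℂ) ((1 : ℂ) - (r : ℂ) * E) = 1 - (r : ℂ) * E⁻¹ := by
    rw [hEdef]
    rw [map_sub, map_one, map_mul, ← Complex.exp_conj]
    simp [Complex.conj_ofReal, Complex.exp_neg]
  have hsq' : ((1 : ℂ) - (r : ℂ) * E) * ((1 : ℂ) - (r : ℂ) * E⁻¹) =
      ((‖(1 : ℂ) - (r : ℂ) * E‖ : ℝ) : ℂ) ^ 2 := by
    rw [← hconj, Complex.mul_conj]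
    norm_cast
    exact (Complex.sq_norm _).symm
  have hAne : ((‖(1 : ℂ) - (r : ℂ) * E‖ : ℝ) : ℂ) ≠ 0 := by
    exact_mod_cast ne_of_gt habs
  field_simp at hsq' ⊢
  linear_combination hsq'

private lemma aux_theta_zero (r : ℝ) (hr0 : 0 ≤ r) (hr1 : r < 1) : mobTheta r 0 = π := by
  have h : (1 : ℂ) - (r : ℂ) * Complex.exp (Complex.I * (0 : ℝ)) = ((1 - r : ℝ) : ℂ) := by
    push_cast; simp
  rw [mobTheta, h, Complex.log_im, Complex.arg_ofReal_of_nonneg (by linarith)]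
  ring

private lemma aux_theta_two_pi (r : ℝ) (hr0 : 0 ≤ r) (hr1 : r < 1) :
    mobTheta r (2 * π) = π + 2 * π := by
  have he : Complex.exp (Complex.I * ((2 * π : ℝ) : ℂ)) = 1 := by
    rw [mul_comm]; push_cast
    exact Complex.exp_two_pi_mul_I
  have h : (1 : ℂ) - (r : ℂ) * Complex.exp (Complex.I * ((2 * π : ℝ) : ℂ)) = ((1 - r : ℝ) : ℂ) := by
    rw [he]; push_cast; ring
  rw [mobTheta, h, Complex.log_im, Complex.arg_ofReal_of_nonneg (by linarith)]
  ring

theorem mobius_substitution (r : ℝ) (hr0 : 0 ≤ r) (hr1 : r < 1) :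
    (∀ s : ℝ, HasDerivAt
        (fun s : ℝ => ((r : ℂ) - Complex.exp (Complex.I * s)) / (1 - r * Complex.exp (Complex.I * s)))
        (Complex.I * (((1 - r ^ 2) / (1 + r ^ 2 - 2 * r * Real.cos s) : ℝ) : ℂ) *
          (((r : ℂ) - Complex.exp (Complex.I * s)) / (1 - r * Complex.exp (Complex.I * s)))) s) ∧
    ∀ g : ℂ → ℂ, ContinuousOn g (Metric.sphere (0:ℂ) 1) →
      (∫ s in (0:ℝ)..(2 * π),
          g (((r : ℂ) - Complex.exp (Complex.I * s)) / (1 - r * Complex.exp (Complex.I * s))) *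
            (((1 - r ^ 2) / (1 + r ^ 2 - 2 * r * Real.cos s) : ℝ) : ℂ)) =
      ∫ θ in (0:ℝ)..(2 * π), g (Complex.exp (Complex.I * θ)) := by
  constructor
  · exact aux_hasDeriv r hr0 hr1
  · intro g hg
    have hθ : ∀ x ∈ Set.uIcc (0:ℝ) (2 * π), HasDerivAt (mobTheta r)
        ((fun s => (1 - r ^ 2) / (1 + r ^ 2 - 2 * r * Real.cos s)) x) x :=
      fun x _ => aux_theta_deriv r hr0 hr1 x
    have hρc : ContinuousOn (fun s => (1 - r ^ 2) / (1 + r ^ 2 - 2 * r * Real.cos s))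
        (Set.uIcc (0:ℝ) (2 * π)) := by
      apply Continuous.continuousOn
      exact continuous_const.div (by continuity) (fun s => ne_of_gt (aux_D_pos r hr0 hr1 s))
    have hGc : ContinuousOn (fun u : ℝ => g (Complex.exp (Complex.I * u)))
        (mobTheta r '' Set.uIcc (0:ℝ) (2 * π)) := by
      have hmaps : ∀ u : ℝ, Complex.exp (Complex.I * u) ∈ Metric.sphere (0:ℂ) 1 := by
        intro u
        have h1 : ‖Complex.exp (Complex.I * u)‖ = 1 := by
          rw [mul_comm]; exact Complex.norm_exp_ofReal_mul_I u
        simp [h1]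
      exact (hg.comp ((Complex.continuous_exp.comp
        (continuous_const.mul Complex.continuous_ofReal)).continuousOn)
        (fun u _ => hmaps u)).mono (Set.subset_univ _) |>.mono (by intro x hx; exact hx)
    have hsub := integral_comp_smul_deriv' hθ hρc hGc
    have heq : (fun s : ℝ =>
        g (((r : ℂ) - Complex.exp (Complex.I * s)) / (1 - r * Complex.exp (Complex.I * s))) *
          (((1 - r ^ 2) / (1 + r ^ 2 - 2 * r * Real.cos s) : ℝ) : ℂ)) =
        fun s : ℝ => ((1 - r ^ 2) / (1 + r ^ 2 - 2 * r * Real.cos s)) •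
          ((fun u : ℝ => g (Complex.exp (Complex.I * u))) ∘ mobTheta r) s := by
      funext s
      simp only [Function.comp_apply, Complex.real_smul]
      rw [aux_exp_theta r hr0 hr1 s, mul_comm]
    rw [heq, hsub, aux_theta_zero r hr0 hr1, aux_theta_two_pi r hr0 hr1]
    have hper : Function.Periodic (fun u : ℝ => g (Complex.exp (Complex.I * u))) (2 * π) := by
      intro u
      simp only
      congr 1
      rw [Complex.ofReal_add]
      rw [mul_add, Complex.exp_add]
      have : Complex.exp (Complex.I * ((2 * π : ℝ) : ℂ)) = 1 := by
        rw [mul_comm]; push_cast; exact Complex.exp_two_pi_mul_I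
      rw [this, mul_one]
    simpa using hper.intervalIntegral_add_eq π 0
end

section
/- For q > 1 and 0 ≤ r < 1, ∫_0^{2π} (1 + r² - 2r cos s)^{q-1} ds ≤ 2^{q-1} ∫_0^{2π} (1 - cos s)^{q-1} ds. -/
open Complex Metric Set Real intervalIntegral MeasureTheory

local notation "conj'" => starRingEnd ℂ

lemma kernel_eq (z w : ℂ) (hw : w * conj' w = 1) (hzw : w ≠ z) :
    w * (w - z)⁻¹ + w * (conj' z) * (1 - conj' z * w)⁻¹
      = ((1 - Complex.normSq z) / Complex.normSq (w - z) : ℝ) := by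
  have h1 : w - z ≠ 0 := sub_ne_zero.2 hzw
  have h1' : conj' w - conj' z ≠ 0 := by
    intro h
    rw [← map_sub, map_eq_zero] at h
    exact h1 h
  have h2 : (1 : ℂ) - conj' z * w ≠ 0 := by
    intro h
    apply h1'
    have : w * (conj' w - conj' z) = 0 := by
      rw [mul_sub, hw]
      linear_combination h
    rcases mul_eq_zero.1 this with h' | h'
    · exfalso; rw [h'] at hw; simp at hw
    · exact h'
  have hw0 : w ≠ 0 := by intro h; rw [h] at hw; simp at hw
  have hcast : ((Complex.normSq (w - z) : ℝ) : ℂ) = (w - z) * (conj' w - conj' z) := by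
    rw [← Complex.mul_conj, map_sub]
  have hcast2 : ((1 - Complex.normSq z : ℝ) : ℂ) = 1 - z * conj' z := by
    push_cast [← Complex.mul_conj]
    ring
  rw [Complex.ofReal_div, hcast, hcast2]
  have h2' : (1:ℂ) - w * conj' z ≠ 0 := by rwa [mul_comm]
  field_simp
  linear_combination (1 - z * conj' z) * hw

lemma circleMap_mul_conj (t : ℝ) :
    circleMap 0 1 t * conj' (circleMap 0 1 t) = 1 := by
  rw [Complex.mul_conj, ← Complex.sq_norm]
  simp

lemma circleMap_ne (z : ℂ) (hz : ‖z‖ < 1) (t : ℝ) : circleMap 0 1 t ≠ z := by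
  intro h
  rw [← h] at hz
  simp at hz

lemma poisson_rep {f : ℂ → ℂ} (hc : ContinuousOn f (closedBall 0 1))
    (hd : ∀ x ∈ ball (0:ℂ) 1, DifferentiableAt ℂ f x) {z : ℂ} (hz : ‖z‖ < 1) :
    (∫ t in (0:ℝ)..(2*π),
        (((1 - Complex.normSq z) / Complex.normSq (circleMap 0 1 t - z) : ℝ) : ℂ)
          * f (circleMap 0 1 t))
      = (2*π : ℝ) • f z := by
  have hzball : z ∈ ball (0:ℂ) 1 := by simpa [mem_ball, Complex.dist_eq] using hz
  have hfc : Continuous fun t : ℝ => f (circleMap 0 1 t) := by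
    apply hc.comp_continuous (continuous_circleMap 0 1)
    intro t
    simp [mem_closedBall, Complex.dist_eq]
  have hne2 : ∀ w : ℂ, w ∈ closedBall (0:ℂ) 1 → (1 : ℂ) - conj' z * w ≠ 0 := by
    intro w hw h
    have : ‖conj' z * w‖ < 1 := by
      rw [norm_mul]
      simp only [Complex.norm_conj]
      calc ‖z‖ * ‖w‖ ≤ ‖z‖ * 1 := by
            apply mul_le_mul_of_nonneg_left _ (norm_nonneg _)
            simpa [mem_closedBall, Complex.dist_eq] using hw
        _ < 1 := by simpa using hz
    rw [sub_eq_zero] at h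
    rw [← h] at this
    simp at this
  -- Cauchy integral formula
  have A := Complex.circleIntegral_sub_inv_smul_of_differentiable_on_off_countable
    (s := ∅) countable_empty hzball hc (fun x hx => hd x hx.1)
  -- Cauchy-Goursat for the reflected kernel
  have B := Complex.circleIntegral_eq_zero_of_differentiable_on_off_countable
    (f := fun w => (conj' z * (1 - conj' z * w)⁻¹) * f w) zero_le_one
    (s := ∅) countable_empty
    (by
      apply ContinuousOn.mul _ hc
      apply ContinuousOn.mul continuousOn_const
      apply ContinuousOn.inv₀
      · exact (continuousOn_const.sub (continuousOn_const.mul continuousOn_id))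
      · exact fun w hw => hne2 w hw)
    (by
      rintro x ⟨hx, -⟩
      apply DifferentiableAt.mul _ (hd x hx)
      apply DifferentiableAt.mul (differentiableAt_const _)
      apply DifferentiableAt.inv
      · exact (differentiableAt_const _).sub ((differentiableAt_const _).mul differentiableAt_id)
      · exact hne2 x (ball_subset_closedBall hx))
  rw [circleIntegral] at A B
  simp only [deriv_circleMap, smul_eq_mul] at A B
  have hI : (I : ℂ) ≠ 0 := Complex.I_ne_zero
  -- extract ∫ term1 = 2π f z
  have A' : (∫ t in (0:ℝ)..(2*π), circleMap 0 1 t * (circleMap 0 1 t - z)⁻¹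
      * f (circleMap 0 1 t)) = (2*π : ℝ) • f z := by
    apply mul_left_cancel₀ hI
    rw [← intervalIntegral.integral_const_mul]
    have : (∫ t in (0:ℝ)..(2*π), I * (circleMap 0 1 t * (circleMap 0 1 t - z)⁻¹
        * f (circleMap 0 1 t)))
        = ∫ t in (0:ℝ)..(2*π), circleMap 0 1 t * I * ((circleMap 0 1 t - z)⁻¹
        * f (circleMap 0 1 t)) := by
      apply intervalIntegral.integral_congr
      intro t _
      ring
    rw [this, A]
    rw [Complex.real_smul]
    push_cast
    ring
  have B' : (∫ t in (0:ℝ)..(2*π), circleMap 0 1 t * conj' z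
      * (1 - conj' z * circleMap 0 1 t)⁻¹ * f (circleMap 0 1 t)) = 0 := by
    apply mul_left_cancel₀ hI
    rw [← intervalIntegral.integral_const_mul]
    have : (∫ t in (0:ℝ)..(2*π), I * (circleMap 0 1 t * conj' z
        * (1 - conj' z * circleMap 0 1 t)⁻¹ * f (circleMap 0 1 t)))
        = ∫ t in (0:ℝ)..(2*π), circleMap 0 1 t * I * (conj' z
        * (1 - conj' z * circleMap 0 1 t)⁻¹ * f (circleMap 0 1 t)) := by
      apply intervalIntegral.integral_congr
      intro t _
      ring
    rw [this, B]
    ring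
  -- integrability of the two pieces
  have int1 : IntervalIntegrable (fun t => circleMap 0 1 t * (circleMap 0 1 t - z)⁻¹
      * f (circleMap 0 1 t)) MeasureTheory.volume 0 (2*π) := by
    apply Continuous.intervalIntegrable
    apply Continuous.mul _ hfc
    apply Continuous.mul (continuous_circleMap 0 1)
    apply Continuous.inv₀ ((continuous_circleMap 0 1).sub continuous_const)
    exact fun t => sub_ne_zero.2 (circleMap_ne z hz t)
  have int2 : IntervalIntegrable (fun t => circleMap 0 1 t * conj' z
      * (1 - conj' z * circleMap 0 1 t)⁻¹ * f (circleMap 0 1 t))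
      MeasureTheory.volume 0 (2*π) := by
    apply Continuous.intervalIntegrable
    apply Continuous.mul _ hfc
    apply Continuous.mul ((continuous_circleMap 0 1).mul continuous_const)
    apply Continuous.inv₀ (continuous_const.sub (continuous_const.mul (continuous_circleMap 0 1)))
    intro t
    apply hne2
    simp [mem_closedBall, Complex.dist_eq]
  calc (∫ t in (0:ℝ)..(2*π),
        (((1 - Complex.normSq z) / Complex.normSq (circleMap 0 1 t - z) : ℝ) : ℂ)
          * f (circleMap 0 1 t))
      = ∫ t in (0:ℝ)..(2*π), (circleMap 0 1 t * (circleMap 0 1 t - z)⁻¹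
          * f (circleMap 0 1 t) + circleMap 0 1 t * conj' z
          * (1 - conj' z * circleMap 0 1 t)⁻¹ * f (circleMap 0 1 t)) := by
        apply intervalIntegral.integral_congr
        intro t _
        simp only []
        rw [← kernel_eq z _ (circleMap_mul_conj t) (circleMap_ne z hz t)]
        ring
    _ = (2*π : ℝ) • f z := by
        rw [intervalIntegral.integral_add int1 int2, A', B', add_zero]

noncomputable def Pker (r s t : ℝ) : ℝ :=
  (1 - r ^ 2) / (1 + r ^ 2 - 2 * r * Real.cos (t - s))

lemma normSq_circleMap (r s : ℝ) : Complex.normSq (circleMap 0 r s) = r ^ 2 := by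
  rw [Complex.normSq_eq_norm_sq, norm_circleMap_zero]
  exact sq_abs r


lemma circle_mul_conj (r s t : ℝ) :
    (circleMap 0 1 t * conj' (circleMap 0 r s)).re = r * Real.cos (t - s) := by
  simp only [circleMap, zero_add, one_mul, map_mul, Complex.conj_ofReal,
    ← Complex.exp_conj, map_mul, Complex.conj_I, Complex.conj_ofReal]
  have h1 : (↑1 * Complex.exp (↑t * Complex.I) * (↑r * Complex.exp (↑s * -Complex.I)))
      = ↑r * Complex.exp ((t - s : ℝ) * Complex.I) := by
    rw [one_mul, mul_left_comm, ← Complex.exp_add]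
    congr 1
    push_cast
    ring
  push_cast
  rw [h1]
  simp [Complex.mul_re, Complex.ofReal_re, Complex.ofReal_im]
  left
  rw [← Complex.ofReal_sub, Complex.exp_ofReal_mul_I_re]

lemma normSq_circle_sub (r s t : ℝ) :
    Complex.normSq (circleMap 0 1 t - circleMap 0 r s)
      = 1 + r ^ 2 - 2 * r * Real.cos (t - s) := by
  rw [Complex.normSq_sub, normSq_circleMap, normSq_circleMap, circle_mul_conj]
  ring

lemma Pker_symm (r s t : ℝ) : Pker r s t = Pker r t s := by
  unfold Pker
  rw [← Real.cos_neg (s - t), neg_sub]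

lemma Pker_denom_pos {r : ℝ} (hr0 : 0 ≤ r) (hr1 : r < 1) (s t : ℝ) :
    0 < 1 + r ^ 2 - 2 * r * Real.cos (t - s) := by
  nlinarith [Real.neg_one_le_cos (t - s), Real.cos_le_one (t - s), sq_nonneg (1 - r),
    sq_nonneg (1 + r), mul_nonneg hr0 (sub_nonneg.2 (Real.cos_le_one (t-s)))]

lemma Pker_nonneg {r : ℝ} (hr0 : 0 ≤ r) (hr1 : r < 1) (s t : ℝ) : 0 ≤ Pker r s t := by
  apply div_nonneg (by nlinarith) (Pker_denom_pos hr0 hr1 s t).le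

lemma Pker_continuous {r : ℝ} (hr0 : 0 ≤ r) (hr1 : r < 1) :
    Continuous (fun p : ℝ × ℝ => Pker r p.1 p.2) := by
  apply Continuous.div continuous_const
  · fun_prop
  · intro p
    exact (Pker_denom_pos hr0 hr1 p.1 p.2).ne'

lemma kernelPker (r s t : ℝ) :
    (1 - Complex.normSq (circleMap 0 r s))
      / Complex.normSq (circleMap 0 1 t - circleMap 0 r s) = Pker r s t := by
  rw [normSq_circleMap, normSq_circle_sub]
  rfl

lemma Pker_integral {r : ℝ} (hr0 : 0 ≤ r) (hr1 : r < 1) (s : ℝ) :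
    (∫ t in (0:ℝ)..(2*π), Pker r s t) = 2*π := by
  have habs : ‖circleMap 0 r s‖ < 1 := by
    rw [norm_circleMap_zero, _root_.abs_of_nonneg hr0]
    exact hr1
  have H := poisson_rep (f := fun _ => (1:ℂ)) continuousOn_const
    (fun x _ => differentiableAt_const _) habs
  simp only [mul_one] at H
  have H2 : (∫ t in (0:ℝ)..(2*π), ((Pker r s t : ℝ) : ℂ)) = ((2*π : ℝ) : ℂ) :=
    calc (∫ t in (0:ℝ)..(2*π), ((Pker r s t : ℝ) : ℂ))
        = ∫ t in (0:ℝ)..(2*π), (((1 - Complex.normSq (circleMap 0 r s))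
            / Complex.normSq (circleMap 0 1 t - circleMap 0 r s) : ℝ) : ℂ) := by
          apply intervalIntegral.integral_congr
          intro t _
          simp only []
          rw [kernelPker]
      _ = (2*π : ℝ) • (1 : ℂ) := H
      _ = ((2*π : ℝ) : ℂ) := by
          rw [Complex.real_smul, mul_one]
  rw [intervalIntegral.integral_ofReal] at H2
  exact_mod_cast H2

lemma l2mono {f : ℂ → ℂ} (hc : ContinuousOn f (closedBall 0 1))
    (hd : ∀ x ∈ ball (0:ℂ) 1, DifferentiableAt ℂ f x) {r : ℝ} (hr0 : 0 ≤ r) (hr1 : r < 1) :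
    (∫ s in (0:ℝ)..(2*π), ‖f (circleMap 0 r s)‖^2)
      ≤ ∫ t in (0:ℝ)..(2*π), ‖f (circleMap 0 1 t)‖^2 := by
  have hpi : (0:ℝ) ≤ 2*π := by positivity
  have hfc1 : Continuous fun t : ℝ => f (circleMap 0 1 t) := by
    apply hc.comp_continuous (continuous_circleMap 0 1)
    intro t
    simp [mem_closedBall, Complex.dist_eq]
  have hfcr : Continuous fun s : ℝ => f (circleMap 0 r s) := by
    apply hc.comp_continuous (continuous_circleMap 0 r)
    intro s
    simp only [mem_closedBall, dist_zero_right, norm_circleMap_zero]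
    rw [_root_.abs_of_nonneg hr0]
    exact hr1.le
  set N : ℝ → ℝ := fun t => ‖f (circleMap 0 1 t)‖ with hN
  have hNc : Continuous N := hfc1.norm
  have hPN2c : Continuous (fun p : ℝ × ℝ => Pker r p.1 p.2 * N p.2 ^ 2) :=
    (Pker_continuous hr0 hr1).mul ((hNc.comp continuous_snd).pow 2)
  set M : ℝ → ℝ := fun s => ∫ t in (0:ℝ)..(2*π), Pker r s t * N t ^ 2 with hM
  have hMc : Continuous M :=
    intervalIntegral.continuous_parametric_intervalIntegral_of_continuous'
      (f := fun s t => Pker r s t * N t ^ 2) hPN2c 0 (2*π)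
  have hMnonneg : ∀ s, 0 ≤ M s := by
    intro s
    apply intervalIntegral.integral_nonneg hpi
    intro t _
    exact mul_nonneg (Pker_nonneg hr0 hr1 s t) (sq_nonneg _)
  have hint_t : ∀ s, IntervalIntegrable (fun t => Pker r s t * N t ^ 2)
      MeasureTheory.volume 0 (2*π) := by
    intro s
    exact Continuous.intervalIntegrable (hPN2c.comp (Continuous.prodMk_right s)) 0 (2*π)
  -- pointwise bound
  have key : ∀ s : ℝ, 2*π*‖f (circleMap 0 r s)‖^2 ≤ M s := by
    intro s
    set z := circleMap 0 r s with hz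
    have habs : ‖z‖ < 1 := by
      rw [hz, norm_circleMap_zero, _root_.abs_of_nonneg hr0]
      exact hr1
    have hrep := poisson_rep hc hd habs
    have hb1 : 2*π*‖f z‖ ≤ ∫ t in (0:ℝ)..(2*π), Pker r s t * N t := by
      have hns : ‖(2*π : ℝ) • f z‖ = 2*π*‖f z‖ := by
        rw [norm_smul, Real.norm_eq_abs, _root_.abs_of_nonneg hpi]
      rw [← hns, ← hrep]
      refine le_trans (intervalIntegral.norm_integral_le_integral_norm hpi) ?_
      apply le_of_eq
      apply intervalIntegral.integral_congr
      intro t _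
      simp only []
      rw [norm_mul, Complex.norm_real, Real.norm_eq_abs, hz, kernelPker,
        _root_.abs_of_nonneg (Pker_nonneg hr0 hr1 s t)]
    have hPNint : IntervalIntegrable (fun t => Pker r s t * N t)
        MeasureTheory.volume 0 (2*π) := by
      exact Continuous.intervalIntegrable
        (((Pker_continuous hr0 hr1).comp (Continuous.prodMk_right s)).mul hNc) 0 (2*π)
    have hPint' : (∫ t in (0:ℝ)..(2*π), Pker r s t) = 2*π := Pker_integral hr0 hr1 s
    have hPintgr : IntervalIntegrable (fun t => Pker r s t)
        MeasureTheory.volume 0 (2*π) := by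
      exact Continuous.intervalIntegrable
        ((Pker_continuous hr0 hr1).comp (Continuous.prodMk_right s)) 0 (2*π)
    have hsq : ∀ ε : ℝ, 0 < ε → ‖f z‖^2 ≤ M s/(2*π) + ε := by
      intro ε hε
      have hcpos : 0 < M s/(2*π) + ε := by
        have := hMnonneg s
        positivity
      set c : ℝ := Real.sqrt (M s/(2*π) + ε) with hcdef
      have hc0 : 0 < c := Real.sqrt_pos.2 hcpos
      have hcsq : c^2 = M s/(2*π) + ε := Real.sq_sqrt hcpos.le
      have hstep : (∫ t in (0:ℝ)..(2*π), Pker r s t * N t)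
          ≤ ∫ t in (0:ℝ)..(2*π), (Pker r s t * N t ^ 2/(2*c) + Pker r s t * (c/2)) := by
        apply intervalIntegral.integral_mono_on hpi hPNint
        · exact ((hint_t s).div_const _).add (hPintgr.mul_const _)
        · intro t _
          have hP := Pker_nonneg hr0 hr1 s t
          have h1 : 2*c*(Pker r s t * N t) ≤ Pker r s t * N t^2 + Pker r s t * c^2 := by
            nlinarith [mul_nonneg hP (sq_nonneg (N t - c))]
          rw [div_add' _ _ _ (by positivity : (2*c : ℝ) ≠ 0)] at *
          rw [le_div_iff₀ (by positivity : (0:ℝ) < 2*c)]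
          calc Pker r s t * N t * (2*c) = 2*c*(Pker r s t * N t) := by ring
            _ ≤ Pker r s t * N t^2 + Pker r s t * c^2 := h1
            _ = Pker r s t * N t ^ 2 + Pker r s t * (c/2) * (2*c) := by
                field_simp
      have hval : (∫ t in (0:ℝ)..(2*π), (Pker r s t * N t ^ 2/(2*c) + Pker r s t * (c/2)))
          = M s/(2*c) + (c/2)*(2*π) := by
        rw [intervalIntegral.integral_add ((hint_t s).div_const _) (hPintgr.mul_const _)]
        rw [intervalIntegral.integral_div, intervalIntegral.integral_mul_const, hPint']
        simp only [hM]
        ring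
      have hMc2 : M s ≤ 2*π*c^2 := by
        rw [hcsq]
        have := hMnonneg s
        have hπ : (0:ℝ) < 2*π := by positivity
        rw [mul_add, mul_div_cancel₀ _ hπ.ne']
        nlinarith
      have hfzc : ‖f z‖ ≤ c := by
        have h2 : 2*π*‖f z‖ ≤ M s/(2*c) + (c/2)*(2*π) := by
          rw [← hval]
          exact le_trans hb1 hstep
        have h3 : M s/(2*c) ≤ π * c := by
          rw [div_le_iff₀ (by positivity : (0:ℝ) < 2*c)]
          nlinarith
        nlinarith [Real.pi_pos]
      calc ‖f z‖^2 ≤ c^2 := by nlinarith [norm_nonneg (f z)]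
        _ = M s/(2*π) + ε := hcsq
    have : ‖f z‖^2 ≤ M s/(2*π) := by
      apply le_of_forall_pos_le_add
      intro ε hε
      exact hsq ε hε
    calc 2*π*‖f z‖^2 ≤ 2*π*(M s/(2*π)) := by
          apply mul_le_mul_of_nonneg_left this hpi
      _ = M s := by
          field_simp
  -- integrate the pointwise bound
  have hmono : (∫ s in (0:ℝ)..(2*π), 2*π*‖f (circleMap 0 r s)‖^2)
      ≤ ∫ s in (0:ℝ)..(2*π), M s := by
    apply intervalIntegral.integral_mono_on hpi
    · exact Continuous.intervalIntegrable
        (continuous_const.mul ((hfcr.norm).pow 2)) 0 (2*π)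
    · exact hMc.intervalIntegrable _ _
    · intro s _
      exact key s
  -- Fubini
  have hswap : (∫ s in (0:ℝ)..(2*π), M s)
      = ∫ t in (0:ℝ)..(2*π), ∫ s in (0:ℝ)..(2*π), Pker r s t * N t ^ 2 := by
    simp only [hM, intervalIntegral.integral_of_le hpi]
    apply MeasureTheory.integral_integral_swap
    rw [Measure.prod_restrict]
    apply MeasureTheory.IntegrableOn.mono_set
      (hPN2c.continuousOn.integrableOn_compact (isCompact_Icc.prod isCompact_Icc))
    exact Set.prod_mono Ioc_subset_Icc_self Ioc_subset_Icc_self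
  have hinner : ∀ t : ℝ, (∫ s in (0:ℝ)..(2*π), Pker r s t * N t ^ 2) = 2*π * N t ^ 2 := by
    intro t
    rw [intervalIntegral.integral_mul_const]
    have : (∫ s in (0:ℝ)..(2*π), Pker r s t) = ∫ s in (0:ℝ)..(2*π), Pker r t s := by
      apply intervalIntegral.integral_congr
      intro s _
      exact Pker_symm r s t
    rw [this, Pker_integral hr0 hr1 t]
  have hfinal : (∫ s in (0:ℝ)..(2*π), M s) = 2*π * ∫ t in (0:ℝ)..(2*π), N t ^ 2 := by
    rw [hswap]
    have : (∫ t in (0:ℝ)..(2*π), ∫ s in (0:ℝ)..(2*π), Pker r s t * N t ^ 2)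
        = ∫ t in (0:ℝ)..(2*π), 2*π * N t ^ 2 := by
      apply intervalIntegral.integral_congr
      intro t _
      exact hinner t
    rw [this, intervalIntegral.integral_const_mul]
  have hlhs : (∫ s in (0:ℝ)..(2*π), 2*π*‖f (circleMap 0 r s)‖^2)
      = 2*π * ∫ s in (0:ℝ)..(2*π), ‖f (circleMap 0 r s)‖^2 := by
    rw [intervalIntegral.integral_const_mul]
  have hπ : (0:ℝ) < 2*π := by positivity
  have := hmono
  rw [hlhs, hfinal] at this
  exact le_of_mul_le_mul_left this hπ

lemma norm_sq_cpow (p : ℝ) (hp : 0 < p) (ρ s : ℝ) :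
    ‖((1 : ℂ) - circleMap 0 ρ s) ^ ((p : ℝ) : ℂ)‖ ^ 2
      = (1 + ρ ^ 2 - 2 * ρ * Real.cos s) ^ p := by
  have hbase : Complex.normSq (1 - circleMap 0 ρ s) = 1 + ρ ^ 2 - 2 * ρ * Real.cos s := by
    have h0 : circleMap 0 1 0 = 1 := by simp [circleMap]
    have := normSq_circle_sub ρ s 0
    rw [h0] at this
    rw [this, zero_sub, Real.cos_neg]
  by_cases hz : (1 : ℂ) - circleMap 0 ρ s = 0
  · rw [hz, Complex.zero_cpow (by exact_mod_cast hp.ne' : ((p : ℝ) : ℂ) ≠ 0)]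
    rw [hz] at hbase
    rw [← hbase]
    simp [Real.zero_rpow hp.ne']
  · set z := (1 : ℂ) - circleMap 0 ρ s with hzdef
    have ha0 : 0 < ‖z‖ := norm_pos_iff.mpr hz
    rw [Complex.norm_cpow_real]
    rw [pow_two, ← Real.rpow_add ha0, ← two_mul,
      Real.rpow_mul ha0.le, ← hbase, ← Complex.sq_norm]
    congr 1
    rw [← Real.rpow_natCast ‖z‖ 2]
    norm_num

theorem integral_power_bound (r q : ℝ) (hr0 : 0 ≤ r) (hr1 : r < 1) (hq : 1 < q) :
    (∫ s in (0:ℝ)..(2 * π), (1 + r ^ 2 - 2 * r * Real.cos s) ^ (q - 1)) ≤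
      2 ^ (q - 1) * ∫ s in (0:ℝ)..(2 * π), (1 - Real.cos s) ^ (q - 1) := by
  set p : ℝ := q - 1 with hpdef
  have hp : 0 < p := by simp only [hpdef]; linarith
  set F : ℂ → ℂ := fun w => (1 - w) ^ ((p : ℝ) : ℂ) with hF
  have hFc : ContinuousOn F (closedBall 0 1) := by
    intro x hx
    by_cases hx1 : x = 1
    · subst hx1
      apply ContinuousAt.continuousWithinAt
      have h0 : ContinuousAt (fun y : ℂ × ℂ => y.1 ^ y.2) ((0:ℂ), ((p : ℝ) : ℂ)) :=
        Complex.continuousAt_cpow_zero_of_re_pos (by simpa using hp)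
      have h1 : ContinuousAt (fun w : ℂ => (((1 : ℂ) - w, ((p : ℝ) : ℂ)) : ℂ × ℂ)) 1 := by
        fun_prop
      have h0' : ContinuousAt (fun y : ℂ × ℂ => y.1 ^ y.2) (((1:ℂ) - 1), ((p : ℝ) : ℂ)) := by
        simpa using h0
      have := h0'.comp (x := (1:ℂ)) h1
      exact this
    · apply ContinuousAt.continuousWithinAt
      have hslit : (1 - x) ∈ Complex.slitPlane := by
        rcases eq_or_ne x.im 0 with him | him
        · left
          simp only [Complex.sub_re, Complex.one_re, sub_pos]
          have hxre : |x.re| ≤ 1 := by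
            calc |x.re| ≤ ‖x‖ := Complex.abs_re_le_norm x
              _ ≤ 1 := by simpa [mem_closedBall, Complex.dist_eq] using hx
          rcases lt_or_eq_of_le (abs_le.1 hxre).2 with h | h
          · exact h
          · exfalso
            apply hx1
            apply Complex.ext
            · simp [h]
            · simp [him]
        · right
          simpa using him
      have := (continuousAt_cpow_const (b := ((p : ℝ) : ℂ)) hslit).comp
        (x := x) ((continuous_const.sub continuous_id).continuousAt)
      exact this
  have hFd : ∀ x ∈ ball (0:ℂ) 1, DifferentiableAt ℂ F x := by
    intro x hx
    have hxlt : ‖x‖ < 1 := by simpa [mem_ball, Complex.dist_eq] using hx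
    have hslit : (1 - x) ∈ Complex.slitPlane := by
      left
      simp only [Complex.sub_re, Complex.one_re, sub_pos]
      calc x.re ≤ |x.re| := le_abs_self _
        _ ≤ ‖x‖ := Complex.abs_re_le_norm x
        _ < 1 := hxlt
    exact DifferentiableAt.cpow ((differentiableAt_const _).sub differentiableAt_id)
      (differentiableAt_const _) hslit
  have hmain := l2mono hFc hFd hr0 hr1
  have hLHS : (∫ s in (0:ℝ)..(2 * π), (1 + r ^ 2 - 2 * r * Real.cos s) ^ p)
      = ∫ s in (0:ℝ)..(2 * π), ‖F (circleMap 0 r s)‖ ^ 2 := by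
    apply intervalIntegral.integral_congr
    intro s _
    exact (norm_sq_cpow p hp r s).symm
  have hRHS : (∫ t in (0:ℝ)..(2 * π), ‖F (circleMap 0 1 t)‖ ^ 2)
      = ∫ t in (0:ℝ)..(2 * π), (2 * (1 - Real.cos t)) ^ p := by
    apply intervalIntegral.integral_congr
    intro t _
    simp only []
    rw [norm_sq_cpow p hp 1 t]
    congr 1
    ring
  have hpull : (∫ t in (0:ℝ)..(2 * π), (2 * (1 - Real.cos t)) ^ p)
      = 2 ^ p * ∫ t in (0:ℝ)..(2 * π), (1 - Real.cos t) ^ p := by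
    rw [← intervalIntegral.integral_const_mul]
    apply intervalIntegral.integral_congr
    intro t _
    simp only []
    rw [Real.mul_rpow (by norm_num) (by nlinarith [Real.cos_le_one t])]
  calc (∫ s in (0:ℝ)..(2 * π), (1 + r ^ 2 - 2 * r * Real.cos s) ^ p)
      = ∫ s in (0:ℝ)..(2 * π), ‖F (circleMap 0 r s)‖ ^ 2 := hLHS
    _ ≤ ∫ t in (0:ℝ)..(2 * π), ‖F (circleMap 0 1 t)‖ ^ 2 := hmain
    _ = ∫ t in (0:ℝ)..(2 * π), (2 * (1 - Real.cos t)) ^ p := hRHS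
    _ = 2 ^ p * ∫ t in (0:ℝ)..(2 * π), (1 - Real.cos t) ^ p := hpull
end

section
/- For q > 1 and 0 ≤ r < 1, ∫_0^{π} (1 + r² - 2r cos s)^{q-1} ds = π · F(1-q, 1-q; 1; r²), where F is the Gauss hypergeometric function. -/
open Real intervalIntegral

namespace HypAux

open Filter MeasureTheory


noncomputable def bc (a : ℝ) : ℕ → ℝ := fun n => (∏ k ∈ Finset.range n, (a + k)) / n.factorial

lemma bc_zero (a : ℝ) : bc a 0 = 1 := by simp [bc]

lemma bc_succ (a : ℝ) (n : ℕ) : bc a (n + 1) = bc a n * ((a + n) / (n + 1)) := by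
  simp only [bc, Finset.prod_range_succ, Nat.factorial_succ, Nat.cast_mul, Nat.cast_add,
    Nat.cast_one, div_mul_div_comm]
  rw [mul_comm ((n:ℝ) + 1)]

lemma abs_bc_succ (a : ℝ) (n : ℕ) :
    |bc a (n + 1)| = |bc a n| * (|a + n| / (n + 1)) := by
  rw [bc_succ, abs_mul, abs_div, abs_of_pos (by positivity : (0:ℝ) < (n:ℝ) + 1)]

lemma ratio_tendsto (a : ℝ) :
    Tendsto (fun n : ℕ => |a + n| / (n + 1)) atTop (nhds 1) := by
  have h0 : Tendsto (fun n : ℕ => (a - 1) * (1 / ((n : ℝ) + 1)) + 1) atTop (nhds 1) := by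
    simpa using (tendsto_one_div_add_atTop_nhds_zero_nat.const_mul (a - 1)).add_const 1
  apply h0.congr'
  have hev : ∀ᶠ n : ℕ in atTop, -a ≤ (n : ℝ) :=
    tendsto_natCast_atTop_atTop.eventually_ge_atTop (-a)
  filter_upwards [hev] with n hn
  have h2 : ((n : ℝ) + 1) ≠ 0 := by positivity
  rw [abs_of_nonneg (by linarith : (0:ℝ) ≤ a + n)]
  field_simp
  ring

lemma ratio_tendsto' (a : ℝ) :
    Tendsto (fun n : ℕ => |a + n| / n) atTop (nhds 1) := by
  have h0 : Tendsto (fun n : ℕ => a * (1 / (n : ℝ)) + 1) atTop (nhds 1) := by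
    simpa using (tendsto_one_div_atTop_nhds_zero_nat.const_mul a).add_const 1
  apply h0.congr'
  have hev : ∀ᶠ n : ℕ in atTop, -a ≤ (n : ℝ) :=
    tendsto_natCast_atTop_atTop.eventually_ge_atTop (-a)
  have hev2 : ∀ᶠ n : ℕ in atTop, 1 ≤ n := eventually_ge_atTop 1
  filter_upwards [hev, hev2] with n hn hn1
  have h2 : ((n : ℝ)) ≠ 0 := by
    have : (1:ℝ) ≤ (n:ℝ) := by exact_mod_cast hn1
    linarith
  rw [abs_of_nonneg (by linarith : (0:ℝ) ≤ a + n)]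
  field_simp

lemma summable_bc {a t : ℝ} (ht0 : 0 ≤ t) (ht : t < 1) :
    Summable (fun n => |bc a n| * t ^ n) := by
  apply summable_of_ratio_norm_eventually_le (r := (1 + t) / 2) (by linarith)
  have h : Tendsto (fun n : ℕ => |a + n| / (n + 1) * t) atTop (nhds t) := by
    simpa using (ratio_tendsto a).mul_const t
  have hev : ∀ᶠ n : ℕ in atTop, |a + n| / (n + 1) * t ≤ (1 + t) / 2 :=
    h.eventually_le_const (by linarith)
  filter_upwards [hev] with n hn
  have hb : (0:ℝ) ≤ |bc a n| * t ^ n := by positivity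
  have key : |bc a (n+1)| * t ^ (n+1) = (|a + n| / (n + 1) * t) * (|bc a n| * t ^ n) := by
    rw [abs_bc_succ]; ring
  rw [Real.norm_eq_abs, Real.norm_eq_abs, abs_of_nonneg (by positivity),
    abs_of_nonneg hb, key]
  exact mul_le_mul_of_nonneg_right hn hb

lemma summable_bc_sq {a t : ℝ} (ht0 : 0 ≤ t) (ht : t < 1) :
    Summable (fun n => |bc a n| ^ 2 * t ^ n) := by
  apply summable_of_ratio_norm_eventually_le (r := (1 + t) / 2) (by linarith)
  have h : Tendsto (fun n : ℕ => (|a + n| / (n + 1)) ^ 2 * t) atTop (nhds t) := by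
    have := ((ratio_tendsto a).mul (ratio_tendsto a)).mul_const t
    simpa [sq] using this
  have hev : ∀ᶠ n : ℕ in atTop, (|a + n| / (n + 1)) ^ 2 * t ≤ (1 + t) / 2 :=
    h.eventually_le_const (by linarith)
  filter_upwards [hev] with n hn
  have hb : (0:ℝ) ≤ |bc a n| ^ 2 * t ^ n := by positivity
  have key : |bc a (n+1)| ^ 2 * t ^ (n+1)
      = ((|a + n| / (n + 1)) ^ 2 * t) * (|bc a n| ^ 2 * t ^ n) := by
    rw [abs_bc_succ]; ring
  rw [Real.norm_eq_abs, Real.norm_eq_abs, abs_of_nonneg (by positivity),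
    abs_of_nonneg hb, key]
  exact mul_le_mul_of_nonneg_right hn hb

lemma summable_bc_deriv {a t : ℝ} (ht0 : 0 ≤ t) (ht : t < 1) :
    Summable (fun n : ℕ => (n : ℝ) * |bc a n| * t ^ (n - 1)) := by
  apply summable_of_ratio_norm_eventually_le (r := (1 + t) / 2) (by linarith)
  have h : Tendsto (fun n : ℕ => |a + n| * t / n) atTop (nhds t) := by
    have h1 := (ratio_tendsto' a).mul_const t
    rw [one_mul] at h1
    apply h1.congr
    intro n
    rw [div_mul_eq_mul_div]
  have hev : ∀ᶠ n : ℕ in atTop, |a + n| * t / n ≤ (1 + t) / 2 :=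
    h.eventually_le_const (by linarith)
  have hev2 : ∀ᶠ n : ℕ in atTop, 1 ≤ n := eventually_ge_atTop 1
  filter_upwards [hev, hev2] with n hn hn1
  have hn0 : ((n:ℝ)) ≠ 0 := by
    have : (1:ℝ) ≤ (n:ℝ) := by exact_mod_cast hn1
    linarith
  have hb : (0:ℝ) ≤ (n : ℝ) * |bc a n| * t ^ (n - 1) := by positivity
  have key : ((n+1:ℕ) : ℝ) * |bc a (n+1)| * t ^ ((n+1) - 1)
      = (|a + n| * t / n) * ((n : ℝ) * |bc a n| * t ^ (n - 1)) := by
    rw [abs_bc_succ, Nat.add_sub_cancel,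
      show t ^ n = t ^ (n-1) * t by rw [← pow_succ, Nat.sub_add_cancel hn1]]
    push_cast
    field_simp
  rw [Real.norm_eq_abs, Real.norm_eq_abs, abs_of_nonneg (by positivity),
    abs_of_nonneg hb, key]
  exact mul_le_mul_of_nonneg_right hn hb


lemma cast_rec (a : ℝ) (n : ℕ) :
    ((n : ℂ) + 1) * (bc a (n + 1) : ℂ) = ((a : ℂ) + n) * (bc a n : ℂ) := by
  have hne : ((n : ℝ) + 1) ≠ 0 := by positivity
  have h : ((n : ℝ) + 1) * bc a (n + 1) = (a + n) * bc a n := by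
    rw [bc_succ]; field_simp
  calc ((n : ℂ) + 1) * (bc a (n + 1) : ℂ) = ((((n:ℝ) + 1) * bc a (n + 1) : ℝ) : ℂ) := by
        push_cast; ring
    _ = (((a + n) * bc a n : ℝ) : ℂ) := by rw [h]
    _ = ((a : ℂ) + n) * (bc a n : ℂ) := by push_cast; ring

lemma slit_of_norm_lt {w : ℂ} (hw : ‖w‖ < 1) : (1 - w) ∈ Complex.slitPlane := by
  rw [Complex.mem_slitPlane_iff]
  left
  have h1 : |w.re| ≤ ‖w‖ := Complex.abs_re_le_norm w
  have h2 := (abs_le.1 h1).2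
  simp only [Complex.sub_re, Complex.one_re]
  linarith

lemma hasSum_binomial (a : ℝ) {z : ℂ} (hz : ‖z‖ < 1) :
    HasSum (fun n => (bc a n : ℂ) * z ^ n) ((1 - z) ^ (-(a : ℂ))) := by
  set R : ℝ := (1 + ‖z‖) / 2 with hR
  have hzn : 0 ≤ ‖z‖ := norm_nonneg z
  have hRpos : 0 < R := by rw [hR]; linarith
  have hR1 : R < 1 := by rw [hR]; linarith
  have hzR : ‖z‖ < R := by rw [hR]; linarith
  set g : ℕ → ℂ → ℂ := fun n w => (bc a n : ℂ) * w ^ n with hg_def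
  set g' : ℕ → ℂ → ℂ := fun n w => (bc a n : ℂ) * (n * w ^ (n - 1)) with hg'_def
  have hderiv : ∀ (n : ℕ) (w : ℂ), HasDerivAt (g n) (g' n w) w := fun n w =>
    (hasDerivAt_pow n w).const_mul _
  set u : ℕ → ℝ := fun n => (n : ℝ) * |bc a n| * R ^ (n - 1) with hu_def
  have hu : Summable u := summable_bc_deriv hRpos.le hR1
  have hball : IsOpen (Metric.ball (0:ℂ) R) := Metric.isOpen_ball
  have hconn : IsPreconnected (Metric.ball (0:ℂ) R) := (convex_ball _ _).isPreconnected
  have hbound : ∀ (n : ℕ) (w : ℂ), w ∈ Metric.ball (0:ℂ) R → ‖g' n w‖ ≤ u n := by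
    intro n w hw
    have hwR : ‖w‖ ≤ R := (mem_ball_zero_iff.1 hw).le
    have : ‖g' n w‖ = |bc a n| * ((n : ℝ) * ‖w‖ ^ (n - 1)) := by
      simp [hg'_def, norm_mul, norm_pow, Complex.norm_real, Real.norm_eq_abs]
    rw [this, hu_def]
    have hp : ‖w‖ ^ (n - 1) ≤ R ^ (n - 1) := pow_le_pow_left₀ (norm_nonneg w) hwR _
    calc |bc a n| * ((n : ℝ) * ‖w‖ ^ (n - 1)) ≤ |bc a n| * ((n : ℝ) * R ^ (n - 1)) := by
          apply mul_le_mul_of_nonneg_left (mul_le_mul_of_nonneg_left hp (by positivity))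
            (abs_nonneg _)
      _ = (n : ℝ) * |bc a n| * R ^ (n - 1) := by ring
  have hsum0 : Summable (fun n => g n 0) := by
    apply summable_of_ne_finset_zero (s := {0})
    intro n hn
    simp only [Finset.mem_singleton] at hn
    simp [hg_def, zero_pow hn]
  have h0mem : (0:ℂ) ∈ Metric.ball (0:ℂ) R := Metric.mem_ball_self hRpos
  set S : ℂ → ℂ := fun w => ∑' n, g n w with hS_def
  set SD : ℂ → ℂ := fun w => ∑' n, g' n w with hSD_def
  have hS : ∀ w ∈ Metric.ball (0:ℂ) R, HasDerivAt S (SD w) w := fun w hw =>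
    hasDerivAt_tsum_of_isPreconnected hu hball hconn (fun n y _ => hderiv n y) hbound h0mem
      hsum0 hw
  have hSummable : ∀ w : ℂ, ‖w‖ < 1 → Summable (fun n => g n w) := by
    intro w hw
    apply Summable.of_norm_bounded (summable_bc (a := a) (norm_nonneg w) hw)
    intro n
    simp [hg_def, norm_mul, norm_pow, Complex.norm_real, Real.norm_eq_abs]
  have hSDsum : ∀ w ∈ Metric.ball (0:ℂ) R, HasSum (fun n => g' n w) (SD w) := fun w hw =>
    (Summable.of_norm_bounded hu (fun n => hbound n w hw)).hasSum
  have key : ∀ w ∈ Metric.ball (0:ℂ) R, (1 - w) * SD w = (a : ℂ) * S w := by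
    intro w hw
    have hw1 : ‖w‖ < 1 := lt_trans (mem_ball_zero_iff.1 hw) hR1
    have hA : HasSum (fun n => (1 - w) * g' n w) ((1 - w) * SD w) := (hSDsum w hw).mul_left _
    have hB : HasSum (fun n => (a : ℂ) * g n w) ((a : ℂ) * S w) :=
      ((hSummable w hw1).hasSum).mul_left _
    have hC := hA.sub hB
    set b : ℕ → ℂ := fun n => (n : ℂ) * (bc a n : ℂ) * w ^ (n - 1) with hb_def
    have hterm : ∀ n : ℕ, (1 - w) * g' n w - (a : ℂ) * g n w = b n - b (n + 1) := by
      intro n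
      cases n with
      | zero =>
          have h1 : bc a 1 = a := by
            rw [show (1:ℕ) = 0 + 1 from rfl, bc_succ, bc_zero]; norm_num
          simp [hg'_def, hg_def, hb_def, bc_zero, h1]
      | succ m =>
          have hrec := cast_rec a (m + 1)
          simp only [hg'_def, hg_def, hb_def, Nat.add_sub_cancel]
          push_cast at hrec ⊢
          linear_combination (w ^ (m + 1)) * hrec
    rw [show (fun n => (1 - w) * g' n w - (a : ℂ) * g n w) = (fun n => b n - b (n + 1))
      from funext hterm] at hC
    have hb0 : b 0 = 0 := by simp [hb_def]
    have hbN : Tendsto b atTop (nhds 0) := by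
      have hsum := summable_bc_deriv (a := a) (norm_nonneg w) hw1
      apply squeeze_zero_norm _ hsum.tendsto_atTop_zero
      intro n
      simp [hb_def, norm_mul, norm_pow, Complex.norm_real, Real.norm_eq_abs]
    have h2 : Tendsto (fun N => ∑ n ∈ Finset.range N, (b n - b (n + 1))) atTop
        (nhds ((1 - w) * SD w - (a : ℂ) * S w)) := hC.tendsto_sum_nat
    have h3 : Tendsto (fun N => ∑ n ∈ Finset.range N, (b n - b (n + 1))) atTop (nhds 0) := by
      have : (fun N => ∑ n ∈ Finset.range N, (b n - b (n + 1))) = fun N => b 0 - b N :=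
        funext fun N => Finset.sum_range_sub' b N
      rw [this, hb0]
      simpa using hbN.neg
    have h4 := tendsto_nhds_unique h2 h3
    exact sub_eq_zero.1 h4
  have hzero : ∀ w ∈ Metric.ball (0:ℂ) R,
      HasDerivAt (fun y => S y * (1 - y) ^ (a : ℂ)) 0 w := by
    intro w hw
    have hw1 : ‖w‖ < 1 := lt_trans (mem_ball_zero_iff.1 hw) hR1
    have hsp := slit_of_norm_lt hw1
    have hne : (1 - w) ≠ 0 := Complex.slitPlane_ne_zero hsp
    have d1 : HasDerivAt (fun y : ℂ => 1 - y) (-1) w := by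
      simpa using (hasDerivAt_id w).const_sub 1
    have d2 : HasDerivAt (fun y : ℂ => (1 - y) ^ (a : ℂ))
        ((a : ℂ) * (1 - w) ^ ((a : ℂ) - 1) * (-1)) w := d1.cpow_const hsp
    have d3 := (hS w hw).mul d2
    refine d3.congr_deriv ?_
    symm
    have e1 : (1 - w) ^ (a : ℂ) = (1 - w) * (1 - w) ^ ((a : ℂ) - 1) := by
      conv_lhs => rw [show (a : ℂ) = 1 + ((a : ℂ) - 1) by ring]
      rw [Complex.cpow_add _ _ hne, Complex.cpow_one]
    rw [e1]
    have hk := key w hw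
    linear_combination (-(1 - w) ^ ((a : ℂ) - 1)) * hk
  have hmemt : ∀ t : ℝ, t ∈ Set.Icc (0:ℝ) 1 → ((t : ℂ) * z) ∈ Metric.ball (0:ℂ) R := by
    intro t ht
    rw [mem_ball_zero_iff, norm_mul, Complex.norm_real, Real.norm_eq_abs, abs_of_nonneg ht.1]
    calc t * ‖z‖ ≤ 1 * ‖z‖ := mul_le_mul_of_nonneg_right ht.2 hzn
      _ = ‖z‖ := one_mul _
      _ < R := hzR
  set φ : ℝ → ℂ := fun t => S ((t : ℂ) * z) * (1 - (t : ℂ) * z) ^ (a : ℂ) with hφ_def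
  have hφ : ∀ t ∈ Set.Icc (0:ℝ) 1, HasDerivAt φ 0 t := by
    intro t ht
    have h1 := (hzero _ (hmemt t ht)).comp ((t : ℂ)) (hasDerivAt_mul_const z)
    have h2 := h1.comp_ofReal
    simpa [Function.comp, hφ_def] using h2
  have hconst := constant_of_has_deriv_right_zero
    (fun t ht => (hφ t ht).continuousAt.continuousWithinAt)
    (fun t ht => (hφ t (Set.mem_Icc_of_Ico ht)).hasDerivWithinAt)
  have h10 := hconst 1 (by norm_num : (1:ℝ) ∈ Set.Icc (0:ℝ) 1)
  have hS0 : S 0 = 1 := by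
    have hrfl : S 0 = ∑' n, g n 0 := rfl
    rw [hrfl, tsum_eq_single 0 (fun n hn => by simp [hg_def, zero_pow hn])]
    simp [hg_def, bc_zero]
  have hSz : S z * (1 - z) ^ (a : ℂ) = 1 := by
    have e1 : φ 1 = S z * (1 - z) ^ (a : ℂ) := by simp [hφ_def]
    have e0 : φ 0 = 1 := by simp [hφ_def, hS0]
    rw [← e1, h10, e0]
  have hne : (1 - z) ≠ 0 := Complex.slitPlane_ne_zero (slit_of_norm_lt hz)
  have hfinal : S z = (1 - z) ^ (-(a : ℂ)) := by
    rw [Complex.cpow_neg]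
    exact eq_inv_of_mul_eq_one_left hSz
  exact hfinal ▸ ((hSummable z hz).hasSum)




lemma hasSum_intervalIntegral {f : ℕ → ℝ → ℂ} {g : ℝ → ℂ} {a b : ℝ} (hab : a ≤ b)
    (hc : ∀ n, Continuous (f n)) {u : ℕ → ℝ} (hu : Summable u)
    (hbd : ∀ n s, ‖f n s‖ ≤ u n) (hg : ∀ s, HasSum (fun n => f n s) (g s)) :
    HasSum (fun n => ∫ s in a..b, f n s) (∫ s in a..b, g s) := by
  have hgt : ∀ s, g s = ∑' n, f n s := fun s => (hg s).tsum_eq.symm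
  rw [intervalIntegral.integral_of_le hab]
  simp_rw [intervalIntegral.integral_of_le hab]
  rw [show (∫ s in Set.Ioc a b, g s) = ∫ s in Set.Ioc a b, ∑' n, f n s from by
    congr 1; exact funext hgt]
  apply hasSum_integral_of_summable_integral_norm
  · intro n; exact (hc n).integrableOn_Ioc
  · apply Summable.of_nonneg_of_le (fun n => integral_nonneg (fun x => norm_nonneg _))
      (fun n => ?_) (hu.mul_right (b - a))
    calc (∫ s in Set.Ioc a b, ‖f n s‖)
        ≤ ∫ _s in Set.Ioc a b, u n := by
          apply setIntegral_mono_on ((hc n).norm.integrableOn_Ioc)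
            (integrableOn_const measure_Ioc_lt_top.ne) measurableSet_Ioc
          exact fun x _ => hbd n x
      _ = u n * (b - a) := by
          rw [setIntegral_const, Real.volume_real_Ioc_of_le hab, smul_eq_mul,
            mul_comm]

lemma integral_exp_int (k : ℤ) :
    (∫ s in (-π)..π, Complex.exp ((k : ℂ) * Complex.I * s))
      = if k = 0 then ((2 * π : ℝ) : ℂ) else 0 := by
  rcases eq_or_ne k 0 with hk | hk
  · rw [if_pos hk]
    simp only [hk, Int.cast_zero, zero_mul, Complex.exp_zero]
    rw [intervalIntegral.integral_const]
    push_cast [Complex.real_smul]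
    ring
  · rw [if_neg hk]
    have hc : (k : ℂ) * Complex.I ≠ 0 := mul_ne_zero (Int.cast_ne_zero.2 hk) Complex.I_ne_zero
    have h := integral_exp_mul_complex (a := -π) (b := π) hc
    simp_rw [mul_comm ((k : ℂ) * Complex.I)] at h ⊢
    rw [h]
    set E : ℂ := Complex.exp (↑π * ((k:ℂ) * Complex.I)) with hE_def
    have hE : E = ((-1 : ℂ)) ^ k := by
      rw [hE_def, show (↑π * ((k:ℂ) * Complex.I)) = (k:ℂ) * (↑π * Complex.I) by ring,
        Complex.exp_int_mul, Complex.exp_pi_mul_I]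
    have hE2 : E * E = 1 := by
      rw [hE, ← zpow_add₀ (by norm_num : (-1:ℂ) ≠ 0), show k + k = 2 * k by ring, zpow_mul]
      norm_num
    have hneg : Complex.exp (↑(-π : ℝ) * ((k:ℂ) * Complex.I)) = E⁻¹ := by
      rw [show (↑(-π:ℝ) * ((k:ℂ) * Complex.I)) = -(↑π * ((k:ℂ) * Complex.I)) by push_cast; ring,
        Complex.exp_neg, hE_def]
    rw [hneg, inv_eq_of_mul_eq_one_right hE2, sub_self, zero_div]

lemma term_eq (c1 c2 r s : ℝ) (n m : ℕ) :
    (starRingEnd ℂ) ((c1 : ℂ) * ((r : ℂ) * Complex.exp (↑s * Complex.I)) ^ n) *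
      ((c2 : ℂ) * ((r : ℂ) * Complex.exp (↑s * Complex.I)) ^ m)
    = ((c1 * c2 * r ^ (n + m) : ℝ) : ℂ) *
      Complex.exp ((((m : ℤ) - (n : ℤ) : ℤ) : ℂ) * Complex.I * s) := by
  have hE : Complex.exp ((n : ℂ) * (↑s * -Complex.I)) * Complex.exp ((m : ℂ) * (↑s * Complex.I))
      = Complex.exp ((((m : ℤ) - (n : ℤ) : ℤ) : ℂ) * Complex.I * s) := by
    rw [← Complex.exp_add]
    congr 1
    push_cast
    ring
  simp only [map_mul, map_pow, Complex.conj_ofReal, ← Complex.exp_conj, Complex.conj_I]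
  rw [mul_pow, mul_pow, ← Complex.exp_nat_mul, ← Complex.exp_nat_mul]
  calc (c1 : ℂ) * ((r:ℂ) ^ n * Complex.exp ((n:ℂ) * (↑s * -Complex.I))) *
        ((c2 : ℂ) * ((r:ℂ) ^ m * Complex.exp ((m:ℂ) * (↑s * Complex.I))))
      = ((c1 : ℂ) * c2 * (r:ℂ) ^ (n + m)) *
        (Complex.exp ((n:ℂ) * (↑s * -Complex.I)) * Complex.exp ((m:ℂ) * (↑s * Complex.I))) := by
        rw [pow_add]; ring
    _ = ((c1 * c2 * r ^ (n + m) : ℝ) : ℂ) *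
        Complex.exp ((((m : ℤ) - (n : ℤ) : ℤ) : ℂ) * Complex.I * s) := by
        rw [hE]; push_cast; ring

lemma integral_term (c1 c2 r : ℝ) (n m : ℕ) :
    (∫ s in (-π)..π, (starRingEnd ℂ) ((c1 : ℂ) * ((r : ℂ) * Complex.exp (↑s * Complex.I)) ^ n) *
      ((c2 : ℂ) * ((r : ℂ) * Complex.exp (↑s * Complex.I)) ^ m))
    = if m = n then ((2 * π * (c1 * c2 * r ^ (n + m)) : ℝ) : ℂ) else 0 := by
  simp_rw [term_eq]
  rw [intervalIntegral.integral_const_mul, integral_exp_int]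
  have hiff : ((m : ℤ) - (n : ℤ) = 0) ↔ m = n := by omega
  by_cases h : m = n
  · rw [if_pos (hiff.2 h), if_pos h]
    push_cast
    ring
  · rw [if_neg (fun hh => h (hiff.1 hh)), if_neg h, mul_zero]


end HypAux

/-- The Gauss hypergeometric function `₂F₁(a, b; c; x)` as a power series. -/
noncomputable def gaussHypergeometric (a b c x : ℝ) : ℝ :=
  ∑' n : ℕ, ((∏ k ∈ Finset.range n, (a + k)) * (∏ k ∈ Finset.range n, (b + k)) /
    ((∏ k ∈ Finset.range n, (c + k)) * (n.factorial : ℝ))) * x ^ n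

theorem integral_eq_hypergeometric (q r : ℝ) (hq : 1 < q) (hr0 : 0 ≤ r) (hr1 : r < 1) :
    (∫ s in (0:ℝ)..π, (1 + r ^ 2 - 2 * r * Real.cos s) ^ (q - 1)) =
      π * gaussHypergeometric (1 - q) (1 - q) 1 (r ^ 2) := by
  have hq0 : (0:ℝ) ≤ q - 1 := by linarith
  have hpi : (-π : ℝ) ≤ π := by linarith [Real.pi_pos]
  set a : ℝ := 1 - q with ha
  set c : ℕ → ℝ := HypAux.bc a with hc
  -- rewrite the RHS hypergeometric series
  have hRHS : gaussHypergeometric (1 - q) (1 - q) 1 (r ^ 2) = ∑' n, (c n) ^ 2 * (r ^ 2) ^ n := by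
    unfold gaussHypergeometric
    congr 1
    funext n
    have h1 : (∏ k ∈ Finset.range n, ((1:ℝ) + k)) = (n.factorial : ℝ) := by
      calc (∏ k ∈ Finset.range n, ((1:ℝ) + k)) = ∏ k ∈ Finset.range n, ((k + 1 : ℕ) : ℝ) := by
            apply Finset.prod_congr rfl; intro k _; push_cast; ring
        _ = ((∏ k ∈ Finset.range n, (k + 1) : ℕ) : ℝ) := by rw [Nat.cast_prod]
        _ = (n.factorial : ℝ) := by rw [Finset.prod_range_add_one_eq_factorial]
    have hf : ((n.factorial : ℝ)) ≠ 0 := Nat.cast_ne_zero.2 n.factorial_ne_zero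
    rw [h1, hc]
    simp only [HypAux.bc, ha]
    field_simp
  -- the complex exponential setup
  set z : ℝ → ℂ := fun s => (r : ℂ) * Complex.exp (↑s * Complex.I) with hz_def
  have hznorm : ∀ s, ‖z s‖ = r := by
    intro s
    rw [hz_def]
    simp only [norm_mul, Complex.norm_real, Real.norm_eq_abs, abs_of_nonneg hr0,
      Complex.norm_exp_ofReal_mul_I, mul_one]
  have hzlt : ∀ s, ‖z s‖ < 1 := fun s => by rw [hznorm]; exact hr1
  set F : ℝ → ℂ := fun s => (1 - z s) ^ ((q : ℂ) - 1) with hF_def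
  have hexp : -((a : ℝ) : ℂ) = (q : ℂ) - 1 := by rw [ha]; push_cast; ring
  have hFsum : ∀ s, HasSum (fun n => (c n : ℂ) * (z s) ^ n) (F s) := by
    intro s
    have h := HypAux.hasSum_binomial a (hzlt s)
    rwa [hexp] at h
  have hslit : ∀ s, (1 - z s) ∈ Complex.slitPlane := fun s => HypAux.slit_of_norm_lt (hzlt s)
  have hzcont : Continuous z := by
    rw [hz_def]
    exact continuous_const.mul (Complex.continuous_exp.comp
      (Complex.continuous_ofReal.mul continuous_const))
  have hFcont : Continuous F := by
    rw [hF_def]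
    exact (continuous_const.sub hzcont).cpow continuous_const hslit
  -- pointwise identity between real integrand and |F|^2
  have hpoint : ∀ s, (((1 + r ^ 2 - 2 * r * Real.cos s) ^ (q - 1) : ℝ) : ℂ)
      = (starRingEnd ℂ) (F s) * F s := by
    intro s
    rw [← Complex.normSq_eq_conj_mul_self]
    congr 1
    have hx0 : (0:ℝ) ≤ ‖1 - z s‖ := norm_nonneg _
    have h1 : ‖F s‖ = ‖1 - z s‖ ^ (q - 1) := by
      rw [hF_def, show ((q : ℂ) - 1) = (((q - 1 : ℝ)) : ℂ) by push_cast; ring]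
      exact Complex.norm_cpow_real _ _
    have h2 : Complex.normSq (1 - z s) = 1 + r ^ 2 - 2 * r * Real.cos s := by
      rw [hz_def]
      have hre : ((r : ℂ) * Complex.exp (↑s * Complex.I)).re = r * Real.cos s := by
        rw [Complex.re_ofReal_mul, Complex.exp_ofReal_mul_I_re]
      have him : ((r : ℂ) * Complex.exp (↑s * Complex.I)).im = r * Real.sin s := by
        rw [Complex.im_ofReal_mul, Complex.exp_ofReal_mul_I_im]
      rw [Complex.normSq_apply, Complex.sub_re, Complex.sub_im, Complex.one_re, Complex.one_im,
        hre, him]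
      nlinarith [Real.sin_sq_add_cos_sq s]
    symm
    calc Complex.normSq (F s) = ‖F s‖ ^ (2:ℕ) := (Complex.sq_norm _).symm
      _ = (‖1 - z s‖ ^ (q - 1)) ^ (2:ℕ) := by rw [h1]
      _ = (‖1 - z s‖ ^ (2:ℕ)) ^ (q - 1) := by
          rw [← Real.rpow_natCast (‖1 - z s‖ ^ (q - 1)) 2,
            ← Real.rpow_natCast ‖1 - z s‖ 2,
            ← Real.rpow_mul hx0, ← Real.rpow_mul hx0, mul_comm]
      _ = Complex.normSq (1 - z s) ^ (q - 1) := by rw [Complex.sq_norm]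
      _ = (1 + r ^ 2 - 2 * r * Real.cos s) ^ (q - 1) := by rw [h2]
  -- continuity of the real integrand
  have hfcont : Continuous (fun s => (1 + r ^ 2 - 2 * r * Real.cos s) ^ (q - 1)) := by
    apply Continuous.rpow_const
    · continuity
    · intro s; right; exact hq0
  -- symmetry
  have hsym : (∫ s in (-π)..(0:ℝ), (1 + r ^ 2 - 2 * r * Real.cos s) ^ (q - 1))
      = ∫ s in (0:ℝ)..π, (1 + r ^ 2 - 2 * r * Real.cos s) ^ (q - 1) := by
    have h2 := intervalIntegral.integral_comp_neg
      (a := (0:ℝ)) (b := π) (fun s => (1 + r ^ 2 - 2 * r * Real.cos s) ^ (q - 1))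
    rw [neg_zero] at h2
    rw [← h2]
    apply intervalIntegral.integral_congr
    intro s _
    simp [Real.cos_neg]
  have hadd : (∫ s in (-π)..π, (1 + r ^ 2 - 2 * r * Real.cos s) ^ (q - 1))
      = 2 * ∫ s in (0:ℝ)..π, (1 + r ^ 2 - 2 * r * Real.cos s) ^ (q - 1) := by
    rw [← intervalIntegral.integral_add_adjacent_intervals (a := -π) (b := 0) (c := π)
      (hfcont.intervalIntegrable _ _) (hfcont.intervalIntegrable _ _), hsym]
    ring
  -- summability facts
  have hcsum : Summable (fun n => |c n| * r ^ n) := HypAux.summable_bc hr0 hr1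
  set M : ℝ := ∑' n, |c n| * r ^ n with hM_def
  have hterm_norm : ∀ (x : ℝ) (n : ℕ), ‖(c n : ℂ) * (z x) ^ n‖ = |c n| * r ^ n := by
    intro x n
    rw [norm_mul, norm_pow, hznorm, Complex.norm_real, Real.norm_eq_abs]
  have hFle : ∀ s, ‖F s‖ ≤ M := by
    intro s
    rw [← (hFsum s).tsum_eq]
    calc ‖∑' n, (c n : ℂ) * (z s) ^ n‖ ≤ ∑' n, ‖(c n : ℂ) * (z s) ^ n‖ := by
          apply norm_tsum_le_tsum_norm
          simp_rw [hterm_norm s]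
          exact hcsum
      _ = M := by simp_rw [hterm_norm s, hM_def]
  have hM0 : (0:ℝ) ≤ M := tsum_nonneg (fun n => by positivity)
  have hcleM : ∀ n, |c n| * r ^ n ≤ M := fun n =>
    hcsum.le_tsum n (fun m _ => by positivity)
  -- inner integrals
  have hinner : ∀ n, (∫ s in (-π)..π, (starRingEnd ℂ) ((c n : ℂ) * (z s) ^ n) * F s)
      = ((2 * π * ((c n) ^ 2 * (r ^ 2) ^ n) : ℝ) : ℂ) := by
    intro n
    have hint : HasSum (fun m => ∫ s in (-π)..π,
        (starRingEnd ℂ) ((c n : ℂ) * (z s) ^ n) * ((c m : ℂ) * (z s) ^ m))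
        (∫ s in (-π)..π, (starRingEnd ℂ) ((c n : ℂ) * (z s) ^ n) * F s) := by
      apply HypAux.hasSum_intervalIntegral
        (f := fun m s => (starRingEnd ℂ) ((c n : ℂ) * (z s) ^ n) * ((c m : ℂ) * (z s) ^ m))
        (g := fun s => (starRingEnd ℂ) ((c n : ℂ) * (z s) ^ n) * F s) hpi
        (fun m => (Complex.continuous_conj.comp
          (continuous_const.mul (hzcont.pow n))).mul (continuous_const.mul (hzcont.pow m)))
        (hcsum.mul_left (|c n| * r ^ n))
        (fun m s => ?_) (fun s => (hFsum s).mul_left _)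
      rw [norm_mul, RCLike.norm_conj, hterm_norm, hterm_norm]
    have hval : ∀ m, (∫ s in (-π)..π,
        (starRingEnd ℂ) ((c n : ℂ) * (z s) ^ n) * ((c m : ℂ) * (z s) ^ m))
        = if m = n then ((2 * π * ((c n) ^ 2 * (r ^ 2) ^ n) : ℝ) : ℂ) else 0 := by
      intro m
      rw [show (∫ s in (-π)..π, (starRingEnd ℂ) ((c n : ℂ) * (z s) ^ n) *
          ((c m : ℂ) * (z s) ^ m)) = if m = n
          then ((2 * π * (c n * c m * r ^ (n + m)) : ℝ) : ℂ) else 0 from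
        HypAux.integral_term (c n) (c m) r n m]
      by_cases h : m = n
      · subst h
        rw [if_pos rfl, if_pos rfl]
        congr 1
        rw [show m + m = 2 * m by ring, pow_mul]
        ring
      · rw [if_neg h, if_neg h]
    rw [funext hval] at hint
    exact ((hasSum_ite_eq n _).unique hint).symm
  -- outer sum
  have houter : HasSum (fun n => ((2 * π * ((c n) ^ 2 * (r ^ 2) ^ n) : ℝ) : ℂ))
      (∫ s in (-π)..π, (starRingEnd ℂ) (F s) * F s) := by
    have h : HasSum (fun n => ∫ s in (-π)..π, (starRingEnd ℂ) ((c n : ℂ) * (z s) ^ n) * F s)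
        (∫ s in (-π)..π, (starRingEnd ℂ) (F s) * F s) := by
      apply HypAux.hasSum_intervalIntegral
        (f := fun n s => (starRingEnd ℂ) ((c n : ℂ) * (z s) ^ n) * F s)
        (g := fun s => (starRingEnd ℂ) (F s) * F s) hpi
        (fun n => (Complex.continuous_conj.comp
          (continuous_const.mul (hzcont.pow n))).mul hFcont)
        (hcsum.mul_right M) (fun n s => ?_) (fun s => ?_)
      · rw [norm_mul, RCLike.norm_conj, hterm_norm]
        exact mul_le_mul_of_nonneg_left (hFle s) (by positivity)
      · have hconj : HasSum (fun n => (starRingEnd ℂ) ((c n : ℂ) * (z s) ^ n))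
            ((starRingEnd ℂ) (F s)) :=
          (hFsum s).map (starRingEnd ℂ).toAddMonoidHom Complex.continuous_conj
        exact hconj.mul_right (F s)
    rwa [funext hinner] at h
  -- pass to the real integral
  have hcomplex_eq : (∫ s in (-π)..π, (starRingEnd ℂ) (F s) * F s)
      = ((∫ s in (-π)..π, (1 + r ^ 2 - 2 * r * Real.cos s) ^ (q - 1) : ℝ) : ℂ) := by
    have h1 : (∫ s in (-π)..π, (starRingEnd ℂ) (F s) * F s)
        = ∫ s in (-π)..π, (((1 + r ^ 2 - 2 * r * Real.cos s) ^ (q - 1) : ℝ) : ℂ) :=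
      intervalIntegral.integral_congr (fun s _ => (hpoint s).symm)
    rw [h1]
    exact RCLike.intervalIntegral_ofReal
  rw [hcomplex_eq] at houter
  have hreal : HasSum (fun n => 2 * π * ((c n) ^ 2 * (r ^ 2) ^ n))
      (∫ s in (-π)..π, (1 + r ^ 2 - 2 * r * Real.cos s) ^ (q - 1)) :=
    Complex.hasSum_ofReal.1 houter
  have hT : (∫ s in (-π)..π, (1 + r ^ 2 - 2 * r * Real.cos s) ^ (q - 1))
      = 2 * π * ∑' n, (c n) ^ 2 * (r ^ 2) ^ n := by
    rw [← hreal.tsum_eq]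
    exact tsum_mul_left
  rw [hRHS]
  rw [hadd] at hT
  linarith [hT]
end
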